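/- arXiv:1501.04647 — 6 statements merged into one kernel-verified Lean document; each statement's English description precedes it below -/
import Mathlib

section
/- Let T be a finite tree of order n ≥ 3 and suppose T is k-adjacency dimensional. Then k ∈ {2,3}; moreover, k = 2 if and only if T has two distinct leaves with a common neighbor (i.e., two leaves sharing a common support vertex). -/
open Finset

namespace AdjDim

noncomputable section
open Classical

variable {V W : Type*}

/-- Truncated distance `d_{G,2}(x,y) = min(d_G(x,y), 2)`:
`0` if `x = y`, `1` if `x` and `y` are adjacent, and `2` otherwise. -/
def d2 (G : SimpleGraph V) (x y : V) : ℕ :=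
  if x = y then 0 else if G.Adj x y then 1 else 2

/-- `S` is a `k`-adjacency generator for `G`: every pair of distinct vertices is
distinguished (w.r.t. `d_{G,2}`) by at least `k` vertices of `S`. -/
def IsKAdjGen (G : SimpleGraph V) [Fintype V] (k : ℕ) (S : Finset V) : Prop :=
  ∀ x y : V, x ≠ y → k ≤ (S.filter (fun w => d2 G x w ≠ d2 G y w)).card

/-- The `k`-adjacency dimension of `G`: the minimum cardinality of a
`k`-adjacency generator. -/
def adim (G : SimpleGraph V) [Fintype V] (k : ℕ) : ℕ :=
  sInf {n | ∃ S : Finset V, IsKAdjGen G k S ∧ S.card = n}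

/-- `B` is a `k`-adjacency basis of `G`: a `k`-adjacency generator of minimum
cardinality. -/
def IsKAdjBasis (G : SimpleGraph V) [Fintype V] (k : ℕ) (B : Finset V) : Prop :=
  IsKAdjGen G k B ∧ B.card = adim G k

/-- `G` is `k`-adjacency dimensional: `k` is the largest integer for which a
`k`-adjacency generator exists. -/
def IsKAdjDimensional (G : SimpleGraph V) [Fintype V] (k : ℕ) : Prop :=
  (∃ S : Finset V, IsKAdjGen G k S) ∧
    ∀ k' : ℕ, k < k' → ¬ ∃ S : Finset V, IsKAdjGen G k' S

/-- `C_G(x,y)`: the set of vertices distinguishing `x` and `y` w.r.t. `d_{G,2}`. -/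
def CSet (G : SimpleGraph V) [Fintype V] (x y : V) : Finset V :=
  univ.filter (fun z => d2 G x z ≠ d2 G y z)

/-- `C(G) = min_{x ≠ y} |C_G(x,y)|`. -/
def Cmin (G : SimpleGraph V) [Fintype V] : ℕ :=
  sInf {m | ∃ x y : V, x ≠ y ∧ (CSet G x y).card = m}

/-- `C_k(G)`: the union of the sets `C_G(x,y)` over pairs of distinct vertices
with `|C_G(x,y)| = k`. -/
def Ck (G : SimpleGraph V) [Fintype V] (k : ℕ) : Finset V :=
  univ.filter (fun z => ∃ x y : V, x ≠ y ∧ (CSet G x y).card = k ∧ z ∈ CSet G x y)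

/-- Two distinct vertices `x, y` are twins: every other vertex is at the same
truncated distance from both. -/
def Twins (G : SimpleGraph V) (x y : V) : Prop :=
  x ≠ y ∧ ∀ z : V, z ≠ x → z ≠ y → d2 G x z = d2 G y z

/-- The join `G + H` of two vertex-disjoint graphs. -/
def join (G : SimpleGraph V) (H : SimpleGraph W) : SimpleGraph (V ⊕ W) where
  Adj x y :=
    match x, y with
    | Sum.inl a, Sum.inl b => G.Adj a b
    | Sum.inr a, Sum.inr b => H.Adj a b
    | Sum.inl _, Sum.inr _ => True
    | Sum.inr _, Sum.inl _ => True
  symm := by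
    constructor
    rintro (a | a) (b | b) h
    · exact G.adj_symm h
    · trivial
    · trivial
    · exact H.adj_symm h
  loopless := by
    constructor
    rintro (a | a) h
    · exact G.irrefl h
    · exact H.irrefl h

/-- `K_1 + H`: the join of a one-vertex graph with `H`, i.e. `H` together with a
new universal vertex. -/
def K1join (H : SimpleGraph W) : SimpleGraph (Unit ⊕ W) :=
  join (⊥ : SimpleGraph Unit) H

set_option linter.unusedSectionVars false

open SimpleGraph

section Lemmas

variable [Fintype V] {T : SimpleGraph V}

lemma self_mem_CSet {x y : V} (hxy : x ≠ y) : x ∈ CSet T x y := by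
  have h1 : d2 T x x = 0 := by simp [d2]
  have h2 : d2 T y x ≠ 0 := by
    simp only [d2, if_neg hxy.symm]
    split <;> simp
  simp only [CSet, mem_filter, mem_univ, true_and, h1]
  exact fun h => h2 h.symm

lemma pair_subset_CSet {x y : V} (hxy : x ≠ y) : ({x, y} : Finset V) ⊆ CSet T x y := by
  intro z hz
  rcases mem_insert.1 hz with rfl | hz
  · exact self_mem_CSet hxy
  · rw [mem_singleton] at hz; subst hz
    have := self_mem_CSet (T := T) hxy.symm
    simp only [CSet, mem_filter, mem_univ, true_and] at this ⊢
    exact fun h => this h.symm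

lemma two_le_card_CSet {x y : V} (hxy : x ≠ y) : 2 ≤ (CSet T x y).card := by
  calc 2 = ({x, y} : Finset V).card := by rw [card_insert_of_notMem (by simpa using hxy), card_singleton]
  _ ≤ _ := card_le_card (pair_subset_CSet hxy)

lemma filter_univ_eq_CSet (x y : V) :
    (univ.filter (fun w => d2 T x w ≠ d2 T y w)) = CSet T x y := rfl

lemma IsKAdjGen.le_card_CSet {k : ℕ} {S : Finset V} (hS : IsKAdjGen T k S)
    {x y : V} (hxy : x ≠ y) : k ≤ (CSet T x y).card := by
  refine le_trans (hS x y hxy) (card_le_card ?_)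
  intro w hw
  simp only [CSet, mem_filter, mem_univ, true_and]
  exact (mem_filter.1 hw).2

lemma isKAdjGen_univ {m : ℕ} (h : ∀ x y : V, x ≠ y → m ≤ (CSet T x y).card) :
    IsKAdjGen T m (univ : Finset V) := fun x y hxy => by
  rw [filter_univ_eq_CSet]; exact h x y hxy


lemma concat_isPath' {u v w : V} {p : T.Walk u v} (hp : p.IsPath) (h : T.Adj v w)
    (hw : w ∉ p.support) : (p.concat h).IsPath := by
  rw [← Walk.isPath_reverse_iff, Walk.reverse_concat]
  exact hp.reverse.cons (by simpa using hw)

lemma not_adj_dist_eq (htree : T.IsTree) {r x w : V} (h : T.Adj x w)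
    (he : T.dist r x = T.dist r w) : False := by
  obtain ⟨p, hp, hl⟩ := htree.isConnected.exists_path_of_dist r x
  have hwp : w ∉ p.support := by
    intro hw
    have h1 : T.dist r w ≤ (p.takeUntil w hw).length := dist_le _
    have h2 : (p.takeUntil w hw).length + (p.dropUntil w hw).length = p.length := by
      rw [← Walk.length_append, Walk.take_spec]
    have h3 : (p.dropUntil w hw).length = 0 := by omega
    have h4 : w = x := Walk.eq_of_length_eq_zero h3
    exact T.loopless.irrefl x (h4 ▸ h)
  have hq : (p.concat h).IsPath := concat_isPath' hp h hwp
  obtain ⟨p', hp', hl'⟩ := htree.isConnected.exists_path_of_dist r w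
  have heq := (htree.existsUnique_path r w).unique hq hp'
  have hlen : (p.concat h).length = p'.length := by rw [heq]
  rw [Walk.length_concat] at hlen
  omega

lemma parent_unique (htree : T.IsTree) {r x w1 w2 : V}
    (h1 : T.Adj w1 x) (h2 : T.Adj w2 x)
    (hd1 : T.dist r w1 + 1 = T.dist r x) (hd2 : T.dist r w2 + 1 = T.dist r x) :
    w1 = w2 := by
  obtain ⟨p1, hp1, hl1⟩ := htree.isConnected.exists_path_of_dist r w1
  obtain ⟨p2, hp2, hl2⟩ := htree.isConnected.exists_path_of_dist r w2
  have hx1 : x ∉ p1.support := by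
    intro hx
    have ha := dist_le (p1.takeUntil x hx)
    have hb := Walk.length_takeUntil_le p1 hx
    omega
  have hx2 : x ∉ p2.support := by
    intro hx
    have ha := dist_le (p2.takeUntil x hx)
    have hb := Walk.length_takeUntil_le p2 hx
    omega
  have hq1 : (p1.concat h1).IsPath := concat_isPath' hp1 h1 hx1
  have hq2 : (p2.concat h2).IsPath := concat_isPath' hp2 h2 hx2
  have heq := (htree.existsUnique_path r x).unique hq1 hq2
  exact (Walk.concat_inj heq).1

lemma exists_parent (htree : T.IsTree) {r x : V} (hx : x ≠ r) :
    ∃ w, T.Adj x w ∧ T.dist r w + 1 = T.dist r x := by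
  obtain ⟨p, hp, hl⟩ := htree.isConnected.exists_path_of_dist x r
  obtain ⟨w, h, q, rfl⟩ := Walk.exists_eq_cons_of_ne hx p
  refine ⟨w, h, ?_⟩
  have h1 : T.dist w r ≤ q.length := dist_le q
  have hlen : q.length + 1 = T.dist x r := by simpa using hl
  have h2 : T.dist x r ≤ T.dist x w + T.dist w r := htree.isConnected.dist_triangle
  have h3 : T.dist x w = 1 := dist_eq_one_iff_adj.2 h
  have h4 : T.dist r w = T.dist w r := dist_comm
  have h5 : T.dist r x = T.dist x r := dist_comm
  omega

lemma leaf_of_max [DecidableRel T.Adj] (htree : T.IsTree) {r u : V}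
    (hmax : ∀ y : V, T.dist r y ≤ T.dist r u) (hur : u ≠ r) :
    ∃ v, T.neighborFinset u = {v} ∧ T.dist r v + 1 = T.dist r u := by
  obtain ⟨v, hadj, hdv⟩ := exists_parent htree hur
  refine ⟨v, ?_, hdv⟩
  ext w
  simp only [mem_neighborFinset, mem_singleton]
  constructor
  · intro hw
    have h1 : T.dist r w ≤ T.dist r u := hmax w
    have h2 : T.dist r u ≠ T.dist r w := fun he => not_adj_dist_eq htree hw he
    have h4 : T.dist w u = 1 := dist_eq_one_iff_adj.2 hw.symm
    have h3 : T.dist r u ≤ T.dist r w + T.dist w u := htree.isConnected.dist_triangle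
    have hdw : T.dist r w + 1 = T.dist r u := by omega
    exact parent_unique htree hw.symm hadj.symm hdw hdv
  · rintro rfl; exact hadj


lemma adj_iff_of_singleton [DecidableRel T.Adj] {u v z : V}
    (hNu : T.neighborFinset u = {v}) : T.Adj u z ↔ z = v := by
  rw [← mem_neighborFinset, hNu, mem_singleton]

lemma CSet_leaf_subset [DecidableRel T.Adj] {u v : V}
    (hNu : T.neighborFinset u = {v}) :
    CSet T u v ⊆ insert u (insert v ((T.neighborFinset v).erase u)) := by
  intro z hz
  simp only [CSet, mem_filter, mem_univ, true_and] at hz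
  by_cases hzu : z = u
  · simp [hzu]
  by_cases hzv : z = v
  · simp [hzv]
  simp only [mem_insert, mem_erase, mem_neighborFinset]
  right; right
  refine ⟨hzu, ?_⟩
  have hne : ¬ T.Adj u z := fun h => hzv ((adj_iff_of_singleton hNu).1 h)
  have h1 : d2 T u z = 2 := by
    simp only [d2, if_neg (Ne.symm hzu), if_neg hne]
  by_contra hav
  apply hz
  have h2 : d2 T v z = 2 := by
    simp only [d2, if_neg (Ne.symm hzv), if_neg hav]
  rw [h1, h2]

lemma CSet_twin_leaves_subset [DecidableRel T.Adj] {u v w : V}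
    (hNu : T.neighborFinset u = {w}) (hNv : T.neighborFinset v = {w}) :
    CSet T u v ⊆ {u, v} := by
  intro z hz
  simp only [CSet, mem_filter, mem_univ, true_and] at hz
  by_contra hzz
  simp only [mem_insert, mem_singleton, not_or] at hzz
  obtain ⟨hzu, hzv⟩ := hzz
  apply hz
  have h1 : d2 T u z = if z = w then 1 else 2 := by
    simp only [d2, if_neg (Ne.symm hzu)]
    by_cases hzw : z = w
    · rw [if_pos ((adj_iff_of_singleton hNu).2 hzw), if_pos hzw]
    · rw [if_neg (fun h => hzw ((adj_iff_of_singleton hNu).1 h)), if_neg hzw]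
  have h2 : d2 T v z = if z = w then 1 else 2 := by
    simp only [d2, if_neg (Ne.symm hzv)]
    by_cases hzw : z = w
    · rw [if_pos ((adj_iff_of_singleton hNv).2 hzw), if_pos hzw]
    · rw [if_neg (fun h => hzw ((adj_iff_of_singleton hNv).1 h)), if_neg hzw]
  rw [h1, h2]

lemma tree_structure [DecidableRel T.Adj] (htree : T.IsTree)
    (h3 : 3 ≤ Fintype.card V) :
    (∃ u v w : V, u ≠ v ∧ T.neighborFinset u = {w} ∧ T.neighborFinset v = {w}) ∨
    (∃ u v : V, T.neighborFinset u = {v} ∧ T.degree v ≤ 2) := by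
  have hconn := htree.isConnected
  obtain ⟨r⟩ : Nonempty V := hconn.nonempty
  obtain ⟨u, -, hmaxu⟩ := Finset.exists_max_image univ (T.dist r) ⟨r, mem_univ r⟩
  have hmax : ∀ y : V, T.dist r y ≤ T.dist r u := fun y => hmaxu y (mem_univ y)
  obtain ⟨y, hy⟩ := Fintype.exists_ne_of_one_lt_card (by omega) r
  have hyr : T.dist r y ≠ 0 := fun h0 => hy (hconn.dist_eq_zero_iff.mp h0).symm
  have hD : 1 ≤ T.dist r u := le_trans (Nat.one_le_iff_ne_zero.2 hyr) (hmax y)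
  have hur : u ≠ r := by
    intro h; subst h
    rw [dist_self] at hD; omega
  obtain ⟨v, hNu, hdv⟩ := leaf_of_max htree hmax hur
  have hadj_uv : T.Adj u v := (adj_iff_of_singleton hNu).2 rfl
  by_cases hA : ∃ u', u' ≠ u ∧ T.Adj v u' ∧ T.dist r u' = T.dist r u
  · obtain ⟨u', hne, hadj, hd'⟩ := hA
    have hu'r : u' ≠ r := by
      intro h; subst h
      rw [dist_self] at hd'; omega
    obtain ⟨v', hNu', hdv'⟩ := leaf_of_max htree (fun z => hd' ▸ hmax z) hu'r
    have hvv' : v = v' := (adj_iff_of_singleton hNu').1 hadj.symm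
    exact Or.inl ⟨u, u', v, hne.symm, hNu, hvv' ▸ hNu'⟩
  · right
    refine ⟨u, v, hNu, ?_⟩
    have key : ∀ z, T.Adj v z → z ≠ u → T.dist r z + 1 = T.dist r v := by
      intro z hadj hzu
      have h1 : T.dist r z ≤ T.dist r u := hmax z
      have h2 : T.dist r z ≠ T.dist r u := fun he => hA ⟨z, hzu, hadj, he⟩
      have h3 : T.dist r v ≠ T.dist r z := fun he => not_adj_dist_eq htree hadj he
      have h5 : T.dist z v = 1 := dist_eq_one_iff_adj.2 hadj.symm
      have h4 : T.dist r v ≤ T.dist r z + T.dist z v := hconn.dist_triangle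
      omega
    have hu_mem : u ∈ T.neighborFinset v := (mem_neighborFinset _ _ _).2 hadj_uv.symm
    have hcard1 : ((T.neighborFinset v).erase u).card ≤ 1 := by
      refine Finset.card_le_one.2 ?_
      intro a ha b hb
      rw [mem_erase, mem_neighborFinset] at ha hb
      exact parent_unique htree ha.2.symm hb.2.symm (key a ha.2 ha.1) (key b hb.2 hb.1)
    have : T.neighborFinset v = insert u ((T.neighborFinset v).erase u) :=
      (Finset.insert_erase hu_mem).symm
    rw [← card_neighborFinset_eq_degree, this]
    exact le_trans (card_insert_le _ _) (by omega)

lemma exists_pair_card_le_three [DecidableRel T.Adj] (htree : T.IsTree)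
    (h3 : 3 ≤ Fintype.card V) :
    ∃ u v : V, u ≠ v ∧ (CSet T u v).card ≤ 3 := by
  rcases tree_structure htree h3 with ⟨u, v, w, huv, hNu, hNv⟩ | ⟨u, v, hNu, hdeg⟩
  · refine ⟨u, v, huv, ?_⟩
    refine le_trans (card_le_card (CSet_twin_leaves_subset hNu hNv)) ?_
    exact le_trans (card_insert_le _ _) (by simp)
  · have hadj : T.Adj u v := (adj_iff_of_singleton hNu).2 rfl
    refine ⟨u, v, hadj.ne, ?_⟩
    refine le_trans (card_le_card (CSet_leaf_subset hNu)) ?_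
    have h1 : ((T.neighborFinset v).erase u).card ≤ 1 := by
      have := Finset.card_erase_of_mem ((mem_neighborFinset _ _ _).2 hadj.symm)
      rw [card_neighborFinset_eq_degree] at this
      omega
    refine le_trans (card_insert_le _ _) ?_
    have := card_insert_le v ((T.neighborFinset v).erase u)
    omega


lemma no_triangle (htree : T.IsTree) {a b c : V} (hab : T.Adj a b)
    (hbc : T.Adj b c) (hac : T.Adj a c) : False := by
  have h1 : (Walk.cons hab Walk.nil).IsPath := by
    simp [Walk.cons_isPath_iff, hab.ne]
  have h2 : (Walk.cons hac (Walk.cons hbc.symm Walk.nil)).IsPath := by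
    simp [Walk.cons_isPath_iff, hbc.ne', hac.ne, hab.ne]
  have heq := (htree.existsUnique_path a b).unique h2 h1
  have := congrArg Walk.length heq
  simp at this

lemma no_square (htree : T.IsTree) {x y w1 w2 : V} (hxy : x ≠ y) (hw : w1 ≠ w2)
    (h1x : T.Adj x w1) (h1y : T.Adj w1 y) (h2x : T.Adj x w2) (h2y : T.Adj w2 y) :
    False := by
  have h1 : (Walk.cons h1x (Walk.cons h1y Walk.nil)).IsPath := by
    simp [Walk.cons_isPath_iff, h1y.ne, h1x.ne, hxy]
  have h2 : (Walk.cons h2x (Walk.cons h2y Walk.nil)).IsPath := by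
    simp [Walk.cons_isPath_iff, h2y.ne, h2x.ne, hxy]
  have heq := (htree.existsUnique_path x y).unique h1 h2
  have := congrArg Walk.support heq
  simp only [Walk.support_cons, Walk.support_nil] at this
  exact hw (by injection this with _ h; injection h)

lemma exists_neighbor (htree : T.IsTree) {x z : V} (hz : z ≠ x) :
    ∃ w, T.Adj x w := by
  obtain ⟨p⟩ := htree.isConnected.preconnected x z
  obtain ⟨w, h, q, -⟩ := Walk.exists_eq_cons_of_ne (Ne.symm hz) p
  exact ⟨w, h⟩

lemma twins_leaves [DecidableRel T.Adj] (htree : T.IsTree) (h3 : 3 ≤ Fintype.card V)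
    {x y : V} (hxy : x ≠ y) (htw : ∀ z : V, z ≠ x → z ≠ y → d2 T x z = d2 T y z) :
    ∃ u v w : V, u ≠ v ∧ T.degree u = 1 ∧ T.degree v = 1 ∧ T.Adj u w ∧ T.Adj v w := by
  have hadjiff : ∀ z, z ≠ x → z ≠ y → (T.Adj x z ↔ T.Adj y z) := by
    intro z h1 h2
    have := htw z h1 h2
    simp only [d2, if_neg (Ne.symm h1), if_neg (Ne.symm h2)] at this
    by_cases hx : T.Adj x z <;> by_cases hy : T.Adj y z <;>
      simp [hx, hy] at this ⊢
  obtain ⟨z₀, hz₀x, hz₀y⟩ : ∃ z : V, z ≠ x ∧ z ≠ y := by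
    by_contra hcon
    push_neg at hcon
    have hsub : (univ : Finset V) ⊆ {x, y} := by
      intro z _
      rcases eq_or_ne z x with rfl | hne
      · simp
      · simp [hcon z hne]
    have hle := card_le_card hsub
    rw [card_univ] at hle
    have : ({x, y} : Finset V).card ≤ 2 := le_trans (card_insert_le _ _) (by simp)
    omega
  by_cases hadj : T.Adj x y
  · exfalso
    have hnox : ∀ z, z ≠ x → z ≠ y → ¬ T.Adj x z := fun z h1 h2 hz =>
      no_triangle htree hadj ((hadjiff z h1 h2).1 hz) hz
    have hnoy : ∀ z, z ≠ x → z ≠ y → ¬ T.Adj y z := fun z h1 h2 hz =>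
      no_triangle htree hadj hz ((hadjiff z h1 h2).2 hz)
    obtain ⟨p, hp, -⟩ := htree.isConnected.exists_path_of_dist x z₀
    obtain ⟨w, hw, q, rfl⟩ := Walk.exists_eq_cons_of_ne (Ne.symm hz₀x) p
    by_cases hwy : w = y
    · subst hwy
      obtain ⟨w', hw', q', rfl⟩ := Walk.exists_eq_cons_of_ne (Ne.symm hz₀y) q
      have hx_not : x ∉ (Walk.cons hw' q').support :=
        ((Walk.cons_isPath_iff _ _).1 hp).2
      have hw'mem : w' ∈ (Walk.cons hw' q').support := by simp
      have hw'x : w' ≠ x := fun h => hx_not (h ▸ hw'mem)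
      exact hnoy w' hw'x (Ne.symm hw'.ne) hw'
    · exact hnox w (Ne.symm hw.ne) hwy hw
  · obtain ⟨w, hxw⟩ := exists_neighbor htree hz₀x
    have hwx : w ≠ x := Ne.symm hxw.ne
    have hwy : w ≠ y := fun h => hadj (h ▸ hxw)
    have hyw : T.Adj y w := (hadjiff w hwx hwy).1 hxw
    have hNx : T.neighborFinset x = {w} := by
      refine Finset.eq_singleton_iff_unique_mem.2 ⟨(mem_neighborFinset _ _ _).2 hxw, ?_⟩
      intro z hz
      have hxz := (mem_neighborFinset _ _ _).1 hz
      by_contra hzw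
      have hzx : z ≠ x := Ne.symm hxz.ne
      have hzy : z ≠ y := fun h => hadj (h ▸ hxz)
      have hyz := (hadjiff z hzx hzy).1 hxz
      exact no_square htree hxy hzw hxz hyz.symm hxw hyw.symm
    have hNy : T.neighborFinset y = {w} := by
      refine Finset.eq_singleton_iff_unique_mem.2 ⟨(mem_neighborFinset _ _ _).2 hyw, ?_⟩
      intro z hz
      have hyz := (mem_neighborFinset _ _ _).1 hz
      by_contra hzw
      have hzy : z ≠ y := Ne.symm hyz.ne
      have hzx : z ≠ x := fun h => hadj (h ▸ hyz).symm
      have hxz := (hadjiff z hzx hzy).2 hyz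
      exact no_square htree hxy hzw hxz hyz.symm hxw hyw.symm
    refine ⟨x, y, w, hxy, ?_, ?_, hxw, hyw⟩
    · rw [← card_neighborFinset_eq_degree, hNx, card_singleton]
    · rw [← card_neighborFinset_eq_degree, hNy, card_singleton]


lemma singleton_of_degree_one [DecidableRel T.Adj] {u w : V}
    (hd : T.degree u = 1) (ha : T.Adj u w) : T.neighborFinset u = {w} := by
  rw [← card_neighborFinset_eq_degree] at hd
  obtain ⟨a, hA⟩ := Finset.card_eq_one.1 hd
  have : w ∈ T.neighborFinset u := (mem_neighborFinset _ _ _).2 ha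
  rw [hA, mem_singleton] at this
  rw [hA, this]

end Lemmas

/-- For a `k`-adjacency dimensional tree of order at least three, `k ∈ {2,3}`,
and `k = 2` iff there are two distinct leaves sharing a common support vertex. -/
theorem tree_kAdjDimensional [Fintype V] (T : SimpleGraph V) [DecidableRel T.Adj]
    (htree : T.IsTree) (h : 3 ≤ Fintype.card V) (k : ℕ)
    (hdim : IsKAdjDimensional T k) :
    (k = 2 ∨ k = 3) ∧
      (k = 2 ↔ ∃ u v w : V, u ≠ v ∧ T.degree u = 1 ∧ T.degree v = 1 ∧
        T.Adj u w ∧ T.Adj v w) := by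
  obtain ⟨⟨S, hS⟩, hmax⟩ := hdim
  have huniv2 : IsKAdjGen T 2 (univ : Finset V) :=
    isKAdjGen_univ fun x y hxy => two_le_card_CSet hxy
  have hk2 : 2 ≤ k := by
    by_contra hcon
    exact hmax 2 (by omega) ⟨univ, huniv2⟩
  have hk3 : k ≤ 3 := by
    obtain ⟨u, v, huv, hc⟩ := exists_pair_card_le_three htree h
    exact le_trans (hS.le_card_CSet huv) hc
  refine ⟨by omega, ?_, ?_⟩
  · intro hk
    have hno3 : ¬ IsKAdjGen T 3 (univ : Finset V) := fun hg =>
      hmax 3 (by omega) ⟨univ, hg⟩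
    have hex : ∃ x y : V, x ≠ y ∧ (CSet T x y).card ≤ 2 := by
      by_contra hc
      push_neg at hc
      exact hno3 (isKAdjGen_univ fun x y hxy => by have := hc x y hxy; omega)
    obtain ⟨x, y, hxy, hcard⟩ := hex
    have htw : ∀ z : V, z ≠ x → z ≠ y → d2 T x z = d2 T y z := by
      intro z hzx hzy
      by_contra hne
      have hz : z ∈ CSet T x y := by
        simp only [CSet, mem_filter, mem_univ, true_and]
        exact hne
      have hsub : ({x, y, z} : Finset V) ⊆ CSet T x y := by
        intro a ha
        simp only [mem_insert, mem_singleton] at ha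
        rcases ha with rfl | rfl | rfl
        · exact self_mem_CSet hxy
        · exact pair_subset_CSet hxy (by simp)
        · exact hz
      have hc3 : ({x, y, z} : Finset V).card = 3 := by
        rw [card_insert_of_notMem (by simp [hxy, Ne.symm hzx]),
          card_insert_of_notMem (by simp [Ne.symm hzy]), card_singleton]
      have := card_le_card hsub
      omega
    exact twins_leaves htree h hxy htw
  · rintro ⟨u, v, w, huv, hdu, hdv, hau, hav⟩
    have hNu := singleton_of_degree_one hdu hau
    have hNv := singleton_of_degree_one hdv hav
    have hsub := CSet_twin_leaves_subset hNu hNv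
    have hle : k ≤ 2 := by
      refine le_trans (hS.le_card_CSet huv) ?_
      refine le_trans (card_le_card hsub) ?_
      exact le_trans (card_insert_le _ _) (by simp)
    omega


end
end AdjDim
end

section
/- Let G be a finite simple graph that is k-adjacency dimensional, and let k1, k2 be integers with 1 ≤ k1 < k2 ≤ k. Then adim_{k1}(G) < adim_{k2}(G). -/
open Finset

namespace AdjDim

noncomputable section
open Classical

variable {V W : Type*}

/-- Theorem 3.1 (Monotony): if `G` is `k`-adjacency dimensional and
`1 ≤ k₁ < k₂ ≤ k`, then `adim_{k₁}(G) < adim_{k₂}(G)`. -/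
theorem adim_strictMono [Fintype V] (G : SimpleGraph V) (k k₁ k₂ : ℕ)
    (hdim : IsKAdjDimensional G k) (h1 : 1 ≤ k₁) (h12 : k₁ < k₂) (h2 : k₂ ≤ k) :
    adim G k₁ < adim G k₂ := by
  classical
  -- there exist two distinct vertices, else every set is a generator for all k'
  obtain ⟨x₀, y₀, hxy0⟩ : ∃ x y : V, x ≠ y := by
    by_contra h
    push_neg at h
    exact hdim.2 (k+1) (Nat.lt_succ_self k)
      ⟨∅, fun x y hxy => absurd (h x y) (by simpa using hxy)⟩
  -- a k₂-generator exists
  obtain ⟨S, hS⟩ := hdim.1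
  have hS2 : IsKAdjGen G k₂ S := fun x y hxy => le_trans h2 (hS x y hxy)
  have hne : {n | ∃ T : Finset V, IsKAdjGen G k₂ T ∧ T.card = n}.Nonempty :=
    ⟨S.card, S, hS2, rfl⟩
  obtain ⟨B, hB, hBcard⟩ := Nat.sInf_mem hne
  -- B is nonempty
  have hBpos : 0 < B.card := by
    have := hB x₀ y₀ hxy0
    have hle : k₂ ≤ B.card := le_trans this (card_le_card (filter_subset _ _))
    omega
  obtain ⟨v, hv⟩ := card_pos.mp hBpos
  -- B.erase v is a k₁-generator
  have hgen : IsKAdjGen G k₁ (B.erase v) := by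
    intro x y hxy
    have h1' := hB x y hxy
    have : (B.erase v).filter (fun w => d2 G x w ≠ d2 G y w)
        = (B.filter (fun w => d2 G x w ≠ d2 G y w)).erase v := by
      ext w; simp [mem_erase, mem_filter, and_comm, and_assoc, and_left_comm]
    rw [this]
    have := card_erase_le (a := v) (s := B.filter (fun w => d2 G x w ≠ d2 G y w))
    have h3 : (B.filter (fun w => d2 G x w ≠ d2 G y w)).card - 1
        ≤ ((B.filter (fun w => d2 G x w ≠ d2 G y w)).erase v).card :=
      Finset.pred_card_le_card_erase
    omega
  have hle : adim G k₁ ≤ (B.erase v).card :=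
    Nat.sInf_le ⟨B.erase v, hgen, rfl⟩
  have : (B.erase v).card < B.card := card_erase_lt_of_mem hv
  simp only [adim] at hle ⊢
  omega


end
end AdjDim
end

section
/- Let G be a finite simple graph of order n ≥ 2 that is k-adjacency dimensional. Then adim_k(G) = n if and only if C_k(G) = V(G). -/
open Finset

namespace AdjDim

noncomputable section
open Classical

variable {V W : Type*}

lemma filter_subset_CSet [Fintype V] (G : SimpleGraph V) (S : Finset V) (x y : V) :
    S.filter (fun w => d2 G x w ≠ d2 G y w) ⊆ CSet G x y :=
  Finset.filter_subset_filter _ (Finset.subset_univ S)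

lemma mem_CSet_left [Fintype V] (G : SimpleGraph V) {x y : V} (h : x ≠ y) :
    x ∈ CSet G x y := by
  simp only [CSet, Finset.mem_filter, Finset.mem_univ, true_and, d2]
  simp [h, Ne.symm h]
  exact Finset.mem_filter.mpr ⟨Finset.mem_univ _, by rw [if_pos rfl, if_neg (Ne.symm h)]; split <;> simp⟩

/-- Theorem 3.4: for a `k`-adjacency dimensional graph `G` of order `n ≥ 2`,
`adim_k(G) = n` if and only if `C_k(G) = V(G)`. -/
theorem adim_eq_card_iff_Ck_eq_univ [Fintype V] (G : SimpleGraph V)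
    (h : 2 ≤ Fintype.card V) (k : ℕ) (hdim : IsKAdjDimensional G k) :
    adim G k = Fintype.card V ↔ Ck G k = Finset.univ := by
  -- every pair is distinguished by at least k vertices
  have hC : ∀ x y : V, x ≠ y → k ≤ (CSet G x y).card := by
    obtain ⟨S, hS⟩ := hdim.1
    exact fun x y hxy =>
      (hS x y hxy).trans (Finset.card_le_card (filter_subset_CSet G S x y))
  -- univ is a k-adjacency generator
  have huniv : IsKAdjGen G k Finset.univ := fun x y hxy => hC x y hxy
  have hle : adim G k ≤ Fintype.card V := by
    apply Nat.sInf_le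
    exact ⟨Finset.univ, huniv, Finset.card_univ⟩
  -- k ≥ 1
  have hk1 : 1 ≤ k := by
    by_contra hk
    have hk0 : k = 0 := by omega
    apply hdim.2 1 (by omega)
    refine ⟨Finset.univ, fun x y hxy => ?_⟩
    refine Finset.card_pos.mpr ⟨x, ?_⟩
    simpa [CSet] using mem_CSet_left G hxy
  constructor
  · intro hadim
    apply Finset.eq_univ_of_forall
    intro v
    by_contra hv
    -- univ.erase v is a k-adjacency generator
    have hgen : IsKAdjGen G k (Finset.univ.erase v) := by
      intro x y hxy
      have hfe : (Finset.univ.erase v).filter (fun w => d2 G x w ≠ d2 G y w)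
          = (CSet G x y).erase v := by
        ext w
        simp [CSet, Finset.mem_erase, and_comm]
      rw [hfe]
      by_cases hc : (CSet G x y).card = k
      · have hvC : v ∉ CSet G x y := by
          intro hvC
          apply hv
          simp only [Ck, Finset.mem_filter, Finset.mem_univ, true_and]
          exact ⟨x, y, hxy, hc, hvC⟩
        rw [Finset.erase_eq_of_notMem hvC, hc]
      · have h1 : k + 1 ≤ (CSet G x y).card := by
          have := hC x y hxy; omega
        have h2 : (CSet G x y).card - 1 ≤ ((CSet G x y).erase v).card :=
          Finset.pred_card_le_card_erase
        omega
    have hcard : (Finset.univ.erase v).card = Fintype.card V - 1 := by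
      rw [Finset.card_erase_of_mem (Finset.mem_univ v), Finset.card_univ]
    have : adim G k ≤ Fintype.card V - 1 :=
      Nat.sInf_le ⟨Finset.univ.erase v, hgen, hcard⟩
    omega
  · intro hCk
    refine le_antisymm hle ?_
    refine le_csInf ⟨Fintype.card V, ⟨Finset.univ, huniv, Finset.card_univ⟩⟩ ?_
    rintro m ⟨S, hS, rfl⟩
    by_contra hlt
    push_neg at hlt
    -- there is a vertex outside S
    have hne : S ≠ Finset.univ := by
      intro hSu
      rw [hSu, Finset.card_univ] at hlt
      omega
    obtain ⟨v, hv⟩ : ∃ v, v ∉ S := by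
      by_contra hall
      push_neg at hall
      exact hne (Finset.eq_univ_iff_forall.mpr hall)
    have hvCk : v ∈ Ck G k := hCk ▸ Finset.mem_univ v
    simp only [Ck, Finset.mem_filter, Finset.mem_univ, true_and] at hvCk
    obtain ⟨x, y, hxy, hcard, hvC⟩ := hvCk
    have hk' : k ≤ (S.filter (fun w => d2 G x w ≠ d2 G y w)).card := hS x y hxy
    have hsub : S.filter (fun w => d2 G x w ≠ d2 G y w) ⊆ (CSet G x y).erase v := by
      intro w hw
      refine Finset.mem_erase.mpr ⟨?_, filter_subset_CSet G S x y hw⟩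
      rintro rfl
      exact hv (Finset.mem_of_mem_filter w hw)
    have hle' : (S.filter (fun w => d2 G x w ≠ d2 G y w)).card ≤ k - 1 := by
      have := Finset.card_le_card hsub
      rw [Finset.card_erase_of_mem hvC, hcard] at this
      exact this
    omega

end
end AdjDim
end

section
/- Let G be a finite simple graph of order n ≥ 2 and let k be an integer with 1 ≤ k ≤ C(G). Then adim_k(G) = k if and only if k ∈ {1,2} and G is isomorphic to one of the following four graphs: the path P_2, the path P_3, the complement of P_2 (two isolated vertices), or the complement of P_3 (the disjoint union of an edge and an isolated vertex). -/
open Finset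

namespace AdjDim

noncomputable section
open Classical

variable {V W : Type*}

lemma d2_map {G : SimpleGraph V} {H : SimpleGraph W} (e : G ≃g H) (x w : V) :
    d2 H (e x) (e w) = d2 G x w := by
  simp only [d2, EmbeddingLike.apply_eq_iff_eq, e.map_adj_iff]

lemma gen_map [Fintype V] [Fintype W] {G : SimpleGraph V} {H : SimpleGraph W}
    (e : G ≃g H) {k : ℕ} {T : Finset W} (hT : IsKAdjGen H k T) :
    IsKAdjGen G k (T.image e.symm) := by
  intro x y hxy
  have hxy' : e x ≠ e y := fun hc => hxy (e.injective hc)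
  calc k ≤ (T.filter (fun w => d2 H (e x) w ≠ d2 H (e y) w)).card := hT _ _ hxy'
    _ = ((T.filter (fun w => d2 H (e x) w ≠ d2 H (e y) w)).image e.symm).card :=
        (Finset.card_image_of_injective _ e.symm.injective).symm
    _ ≤ ((T.image e.symm).filter (fun w => d2 G x w ≠ d2 G y w)).card := by
        apply Finset.card_le_card
        intro z hz
        simp only [Finset.mem_image, Finset.mem_filter] at hz ⊢
        obtain ⟨w, ⟨hwT, hwd⟩, rfl⟩ := hz
        refine ⟨⟨w, hwT, rfl⟩, ?_⟩
        have h1 : d2 G x (e.symm w) = d2 H (e x) w := by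
          have := d2_map e x (e.symm w); simpa using this.symm
        have h2 : d2 G y (e.symm w) = d2 H (e y) w := by
          have := d2_map e y (e.symm w); simpa using this.symm
        rw [h1, h2]; exact hwd

lemma gen_univ [Fintype V] {G : SimpleGraph V} {k : ℕ} (hk2 : k ≤ Cmin G) :
    IsKAdjGen G k (univ : Finset V) := by
  intro x y hxy
  have h1 : Cmin G ≤ (CSet G x y).card := Nat.sInf_le ⟨x, y, hxy, rfl⟩
  exact le_trans hk2 h1

lemma le_adim [Fintype V] {G : SimpleGraph V} (h : 2 ≤ Fintype.card V) (k : ℕ)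
    (hne : {n | ∃ S : Finset V, IsKAdjGen G k S ∧ S.card = n}.Nonempty) :
    k ≤ adim G k := by
  refine le_csInf hne ?_
  rintro n ⟨S, hS, rfl⟩
  obtain ⟨x, y, hxy⟩ := Fintype.exists_pair_of_one_lt_card (α := V) (by omega)
  exact le_trans (hS x y hxy) (Finset.card_filter_le _ _)

lemma genP2_1 : IsKAdjGen (SimpleGraph.pathGraph 2) 1 {0} := by
  intro x y hxy
  refine Finset.card_pos.mpr ⟨0, Finset.mem_filter.mpr ⟨by simp, ?_⟩⟩
  fin_cases x <;> fin_cases y <;> simp_all [d2, SimpleGraph.pathGraph_adj]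

lemma genP2_2 : IsKAdjGen (SimpleGraph.pathGraph 2) 2 {0, 1} := by
  intro x y hxy
  refine Finset.one_lt_card.mpr ⟨0, Finset.mem_filter.mpr ⟨by simp, ?_⟩, 1,
    Finset.mem_filter.mpr ⟨by simp, ?_⟩, by decide⟩ <;>
  fin_cases x <;> fin_cases y <;> simp_all [d2, SimpleGraph.pathGraph_adj]

lemma genP2c_1 : IsKAdjGen (SimpleGraph.pathGraph 2)ᶜ 1 {0} := by
  intro x y hxy
  refine Finset.card_pos.mpr ⟨0, Finset.mem_filter.mpr ⟨by simp, ?_⟩⟩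
  fin_cases x <;> fin_cases y <;>
    simp_all [d2, SimpleGraph.compl_adj, SimpleGraph.pathGraph_adj]

lemma genP2c_2 : IsKAdjGen (SimpleGraph.pathGraph 2)ᶜ 2 {0, 1} := by
  intro x y hxy
  refine Finset.one_lt_card.mpr ⟨0, Finset.mem_filter.mpr ⟨by simp, ?_⟩, 1,
    Finset.mem_filter.mpr ⟨by simp, ?_⟩, by decide⟩ <;>
  fin_cases x <;> fin_cases y <;>
    simp_all [d2, SimpleGraph.compl_adj, SimpleGraph.pathGraph_adj]

lemma genP3_1 : IsKAdjGen (SimpleGraph.pathGraph 3) 1 {0} := by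
  intro x y hxy
  refine Finset.card_pos.mpr ⟨0, Finset.mem_filter.mpr ⟨by simp, ?_⟩⟩
  fin_cases x <;> fin_cases y <;> simp_all [d2, SimpleGraph.pathGraph_adj]

lemma genP3_2 : IsKAdjGen (SimpleGraph.pathGraph 3) 2 {0, 2} := by
  intro x y hxy
  refine Finset.one_lt_card.mpr ⟨0, Finset.mem_filter.mpr ⟨by simp, ?_⟩, 2,
    Finset.mem_filter.mpr ⟨by simp, ?_⟩, by decide⟩ <;>
  fin_cases x <;> fin_cases y <;> simp_all [d2, SimpleGraph.pathGraph_adj]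

lemma genP3c_1 : IsKAdjGen (SimpleGraph.pathGraph 3)ᶜ 1 {0} := by
  intro x y hxy
  refine Finset.card_pos.mpr ⟨0, Finset.mem_filter.mpr ⟨by simp, ?_⟩⟩
  fin_cases x <;> fin_cases y <;>
    simp_all [d2, SimpleGraph.compl_adj, SimpleGraph.pathGraph_adj]

lemma genP3c_2 : IsKAdjGen (SimpleGraph.pathGraph 3)ᶜ 2 {0, 2} := by
  intro x y hxy
  refine Finset.one_lt_card.mpr ⟨0, Finset.mem_filter.mpr ⟨by simp, ?_⟩, 2,
    Finset.mem_filter.mpr ⟨by simp, ?_⟩, by decide⟩ <;>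
  fin_cases x <;> fin_cases y <;>
    simp_all [d2, SimpleGraph.compl_adj, SimpleGraph.pathGraph_adj]

lemma iso2 {G : SimpleGraph V} (H : SimpleGraph (Fin 2)) (x : Fin 2 → V)
    (hall : ∀ y, y = x 0 ∨ y = x 1) (h01 : x 0 ≠ x 1)
    (a01 : G.Adj (x 0) (x 1) ↔ H.Adj 0 1) :
    Nonempty (G ≃g H) := by
  have a10 : G.Adj (x 1) (x 0) ↔ H.Adj 1 0 := by
    rw [SimpleGraph.adj_comm, SimpleGraph.adj_comm (v := (0 : Fin 2))]; exact a01
  refine ⟨(RelIso.mk (Equiv.mk x (fun y => if y = x 0 then 0 else 1) ?_ ?_) ?_).symm⟩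
  · intro i
    fin_cases i
    · simp
    · simp [h01.symm]
  · intro y
    rcases hall y with rfl | rfl
    · simp
    · simp [h01.symm]
  · intro i j
    fin_cases i <;> fin_cases j <;>
      simp only [Equiv.coe_fn_mk] <;>
      first
      | exact a01
      | exact a10
      | simp [SimpleGraph.irrefl]

lemma iso3 {G : SimpleGraph V} (H : SimpleGraph (Fin 3)) (x : Fin 3 → V)
    (hall : ∀ y, y = x 0 ∨ y = x 1 ∨ y = x 2)
    (h01 : x 0 ≠ x 1) (h02 : x 0 ≠ x 2) (h12 : x 1 ≠ x 2)
    (a01 : G.Adj (x 0) (x 1) ↔ H.Adj 0 1)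
    (a02 : G.Adj (x 0) (x 2) ↔ H.Adj 0 2)
    (a12 : G.Adj (x 1) (x 2) ↔ H.Adj 1 2) :
    Nonempty (G ≃g H) := by
  have a10 : G.Adj (x 1) (x 0) ↔ H.Adj 1 0 := by
    rw [SimpleGraph.adj_comm, SimpleGraph.adj_comm (v := (0 : Fin 3))]; exact a01
  have a20 : G.Adj (x 2) (x 0) ↔ H.Adj 2 0 := by
    rw [SimpleGraph.adj_comm, SimpleGraph.adj_comm (v := (0 : Fin 3))]; exact a02
  have a21 : G.Adj (x 2) (x 1) ↔ H.Adj 2 1 := by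
    rw [SimpleGraph.adj_comm, SimpleGraph.adj_comm (v := (1 : Fin 3))]; exact a12
  refine ⟨(RelIso.mk (Equiv.mk x
      (fun y => if y = x 0 then 0 else if y = x 1 then 1 else 2) ?_ ?_) ?_).symm⟩
  · intro i
    fin_cases i
    · simp
    · simp [h01.symm]
    · simp [h02.symm, h12.symm]
  · intro y
    rcases hall y with rfl | rfl | rfl
    · simp
    · simp [h01.symm]
    · simp [h02.symm, h12.symm]
  · intro i j
    fin_cases i <;> fin_cases j <;>
      simp only [Equiv.coe_fn_mk] <;>
      first
      | exact a01 | exact a02 | exact a12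
      | exact a10 | exact a20 | exact a21
      | simp [SimpleGraph.irrefl]

/-- Proposition 3.7: `adim_k(G) = k` if and only if `k ∈ {1,2}` and `G` is one
of `P₂`, `P₃`, `P̄₂`, `P̄₃`. -/
theorem adim_eq_k_iff [Fintype V] (G : SimpleGraph V) (h : 2 ≤ Fintype.card V)
    (k : ℕ) (hk1 : 1 ≤ k) (hk2 : k ≤ Cmin G) :
    adim G k = k ↔
      (k = 1 ∨ k = 2) ∧
        (Nonempty (G ≃g SimpleGraph.pathGraph 2) ∨
          Nonempty (G ≃g SimpleGraph.pathGraph 3) ∨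
          Nonempty (G ≃g (SimpleGraph.pathGraph 2)ᶜ) ∨
          Nonempty (G ≃g (SimpleGraph.pathGraph 3)ᶜ)) := by
  constructor
  · intro hadim
    have hne : {n | ∃ S : Finset V, IsKAdjGen G k S ∧ S.card = n}.Nonempty :=
      ⟨_, (univ : Finset V), gen_univ hk2, rfl⟩
    obtain ⟨S, hS, hcardS⟩ := Nat.sInf_mem hne
    have hcard : S.card = k := hcardS.trans hadim
    obtain ⟨w, hw⟩ : S.Nonempty := Finset.card_pos.mp (by omega)
    have key : ∀ x y : V, x ≠ y → ∀ w' ∈ S, d2 G x w' ≠ d2 G y w' := by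
      intro x y hxy w' hw'
      have h1 := hS x y hxy
      have h2 : S.filter (fun u => d2 G x u ≠ d2 G y u) = S :=
        Finset.eq_of_subset_of_card_le (Finset.filter_subset _ _) (by omega)
      rw [← h2] at hw'
      exact (Finset.mem_filter.mp hw').2
    have adjkey : ∀ x y : V, x ≠ y → x ≠ w → y ≠ w → ¬(G.Adj x w ↔ G.Adj y w) := by
      intro x y hxy hxw hyw hiff
      apply key x y hxy w hw
      simp only [d2, if_neg hxw, if_neg hyw]
      by_cases hax : G.Adj x w
      · rw [if_pos hax, if_pos (hiff.mp hax)]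
      · rw [if_neg hax, if_neg (fun h' => hax (hiff.mpr h'))]
    have herase : (univ.erase w).card ≤ 2 := by
      have hinj : (univ.erase w).card ≤ (univ : Finset Bool).card := by
        apply Finset.card_le_card_of_injOn (fun x => if G.Adj x w then true else false)
          (fun x _ => Finset.mem_univ _)
        intro x hx y hy hf
        by_contra hxy
        refine adjkey x y hxy (Finset.mem_erase.mp hx).1 (Finset.mem_erase.mp hy).1 ?_
        have hb : (if G.Adj x w then true else false) = (if G.Adj y w then true else false) := hf
        constructor
        · intro hax
          by_contra hay
          rw [if_pos hax, if_neg hay] at hb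
          exact Bool.noConfusion hb
        · intro hay
          by_contra hax
          rw [if_neg hax, if_pos hay] at hb
          exact Bool.noConfusion hb
      simpa using hinj
    have herase' : (univ.erase w).card = Fintype.card V - 1 := by
      rw [Finset.card_erase_of_mem (Finset.mem_univ _), Finset.card_univ]
    have hkV : k ≤ Fintype.card V := by
      have := Finset.card_le_univ S
      omega
    have hV23 : Fintype.card V = 2 ∨ Fintype.card V = 3 := by omega
    rcases hV23 with hn | hn
    · obtain ⟨u, hu⟩ := Fintype.exists_ne_of_one_lt_card (α := V) (by omega) w
      have hall : ∀ x : V, x = w ∨ x = u := by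
        intro x
        by_contra hx
        push_neg at hx
        have hc3 : ({x, w, u} : Finset V).card = 3 := by
          rw [Finset.card_insert_of_notMem (by simp [hx.1, hx.2]),
            Finset.card_insert_of_notMem (by simp [Ne.symm hu]),
            Finset.card_singleton]
        have h3 : 3 ≤ Fintype.card V := by
          rw [← Finset.card_univ, ← hc3]
          exact Finset.card_le_card (Finset.subset_univ _)
        omega
      refine ⟨by omega, ?_⟩
      by_cases hadj : G.Adj w u
      · left
        refine iso2 (SimpleGraph.pathGraph 2) ![w, u] hall (Ne.symm hu) ?_
        exact iff_of_true hadj (by simp [SimpleGraph.pathGraph_adj])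
      · right; right; left
        refine iso2 ((SimpleGraph.pathGraph 2)ᶜ) ![w, u] hall (Ne.symm hu) ?_
        exact iff_of_false hadj
          (by simp [SimpleGraph.compl_adj, SimpleGraph.pathGraph_adj])
    · have hucard : (univ.erase w).card = 2 := by omega
      obtain ⟨u, v, huv, hew⟩ := Finset.card_eq_two.mp hucard
      have huw : u ≠ w := by
        have hmem : u ∈ univ.erase w := by rw [hew]; simp
        exact (Finset.mem_erase.mp hmem).1
      have hvw : v ≠ w := by
        have hmem : v ∈ univ.erase w := by rw [hew]; simp
        exact (Finset.mem_erase.mp hmem).1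
      have hall0 : ∀ x : V, x = w ∨ x = u ∨ x = v := by
        intro x
        by_cases hxw : x = w
        · exact Or.inl hxw
        · right
          have hmem : x ∈ univ.erase w := Finset.mem_erase.mpr ⟨hxw, Finset.mem_univ _⟩
          rw [hew] at hmem
          simpa using hmem
      obtain ⟨a, b, hab, haw, hbw, hAa, hAb, hall⟩ :
          ∃ a b : V, a ≠ b ∧ a ≠ w ∧ b ≠ w ∧ G.Adj a w ∧ ¬ G.Adj b w ∧
            ∀ x : V, x = w ∨ x = a ∨ x = b := by
        by_cases h1 : G.Adj u w
        · exact ⟨u, v, huv, huw, hvw, h1,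
            fun h2 => adjkey u v huv huw hvw ⟨fun _ => h2, fun _ => h1⟩, hall0⟩
        · have h2 : G.Adj v w := by
            by_contra h2
            exact adjkey u v huv huw hvw ⟨fun h => absurd h h1, fun h => absurd h h2⟩
          refine ⟨v, u, huv.symm, hvw, huw, h2, h1, ?_⟩
          intro x
          rcases hall0 x with h | h | h
          exacts [Or.inl h, Or.inr (Or.inr h), Or.inr (Or.inl h)]
      have hk2'' : k ≤ 2 := by
        by_contra hk3
        push_neg at hk3
        have hSuniv : S = univ := Finset.eq_of_subset_of_card_le (Finset.subset_univ S)
          (by rw [Finset.card_univ]; omega)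
        have hbS : b ∈ S := by rw [hSuniv]; exact Finset.mem_univ b
        have haS : a ∈ S := by rw [hSuniv]; exact Finset.mem_univ a
        have h3 := key w a (Ne.symm haw) b hbS
        have hwb : ¬ G.Adj w b := fun hh => hAb hh.symm
        have hab2 : G.Adj a b := by
          by_contra hc
          apply h3
          simp [d2, Ne.symm hbw, hwb, hab, hc]
        have h4 := key w b (Ne.symm hbw) a haS
        apply h4
        simp [d2, Ne.symm haw, Ne.symm hab, hAa.symm, hab2.symm]
      refine ⟨by omega, ?_⟩
      by_cases hab' : G.Adj a b
      · right; left
        refine iso3 (SimpleGraph.pathGraph 3) ![w, a, b] hall (Ne.symm haw)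
          (Ne.symm hbw) hab ?_ ?_ ?_
        · exact iff_of_true hAa.symm (by simp [SimpleGraph.pathGraph_adj])
        · exact iff_of_false (fun hh => hAb hh.symm)
            (by simp [SimpleGraph.pathGraph_adj])
        · exact iff_of_true hab' (by simp [SimpleGraph.pathGraph_adj])
      · right; right; right
        refine iso3 ((SimpleGraph.pathGraph 3)ᶜ) ![w, b, a] ?_ (Ne.symm hbw)
          (Ne.symm haw) (Ne.symm hab) ?_ ?_ ?_
        · intro x
          rcases hall x with h | h | h
          exacts [Or.inl h, Or.inr (Or.inr h), Or.inr (Or.inl h)]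
        · exact iff_of_false (fun hh => hAb hh.symm)
            (by simp [SimpleGraph.compl_adj, SimpleGraph.pathGraph_adj])
        · exact iff_of_true hAa.symm
            (by simp [SimpleGraph.compl_adj, SimpleGraph.pathGraph_adj])
        · exact iff_of_false (fun hh => hab' hh.symm)
            (by simp [SimpleGraph.compl_adj, SimpleGraph.pathGraph_adj])
  · rintro ⟨hk, hiso⟩
    obtain ⟨S, hgen, hcard⟩ : ∃ S : Finset V, IsKAdjGen G k S ∧ S.card = k := by
      rcases hiso with he | he | he | he <;> obtain ⟨e⟩ := he <;> rcases hk with rfl | rfl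
      · exact ⟨({0} : Finset (Fin 2)).image e.symm, gen_map e genP2_1,
          by rw [Finset.card_image_of_injective _ e.symm.injective]; decide⟩
      · exact ⟨({0, 1} : Finset (Fin 2)).image e.symm, gen_map e genP2_2,
          by rw [Finset.card_image_of_injective _ e.symm.injective]; decide⟩
      · exact ⟨({0} : Finset (Fin 3)).image e.symm, gen_map e genP3_1,
          by rw [Finset.card_image_of_injective _ e.symm.injective]; decide⟩
      · exact ⟨({0, 2} : Finset (Fin 3)).image e.symm, gen_map e genP3_2,
          by rw [Finset.card_image_of_injective _ e.symm.injective]; decide⟩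
      · exact ⟨({0} : Finset (Fin 2)).image e.symm, gen_map e genP2c_1,
          by rw [Finset.card_image_of_injective _ e.symm.injective]; decide⟩
      · exact ⟨({0, 1} : Finset (Fin 2)).image e.symm, gen_map e genP2c_2,
          by rw [Finset.card_image_of_injective _ e.symm.injective]; decide⟩
      · exact ⟨({0} : Finset (Fin 3)).image e.symm, gen_map e genP3c_1,
          by rw [Finset.card_image_of_injective _ e.symm.injective]; decide⟩
      · exact ⟨({0, 2} : Finset (Fin 3)).image e.symm, gen_map e genP3c_2,
          by rw [Finset.card_image_of_injective _ e.symm.injective]; decide⟩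
    have hub : adim G k ≤ S.card := Nat.sInf_le ⟨S, hgen, rfl⟩
    have hlb : k ≤ adim G k := le_adim h k ⟨S.card, S, hgen, rfl⟩
    omega


end
end AdjDim
end

section
/- Let G be a finite simple graph of order n ≥ 7 and let k be an integer with 1 ≤ k ≤ C(G). Then adim_k(G) ≥ k + 2. -/
open Finset

namespace AdjDim

noncomputable section
open Classical

variable {V W : Type*}

lemma d2_le_two (G : SimpleGraph V) (x y : V) : d2 G x y ≤ 2 := by
  unfold d2
  split
  · omega
  · split <;> omega

lemma d2_eq_zero (G : SimpleGraph V) {x y : V} (h : d2 G x y = 0) : x = y := by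
  by_contra hne
  unfold d2 at h
  rw [if_neg hne] at h
  split at h <;> omega

lemma d2_self (G : SimpleGraph V) (x : V) : d2 G x x = 0 := by
  unfold d2; rw [if_pos rfl]

lemma d2_one_or_two (G : SimpleGraph V) {x y : V} (h : x ≠ y) :
    d2 G x y = 1 ∨ d2 G x y = 2 := by
  unfold d2
  rw [if_neg h]
  split <;> omega

lemma no_small_gen [Fintype V] (G : SimpleGraph V)
    (h : 7 ≤ Fintype.card V) (k : ℕ) (hk1 : 1 ≤ k) (S : Finset V)
    (hgen : IsKAdjGen G k S) (hS : S.card ≤ k + 1) : False := by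
  classical
  -- S is nonempty
  obtain ⟨x0, y0, hxy0⟩ := Fintype.exists_pair_of_one_lt_card
    (by omega : 1 < Fintype.card V)
  have h1 : k ≤ (S.filter (fun w => d2 G x0 w ≠ d2 G y0 w)).card := hgen x0 y0 hxy0
  have hSne : S.Nonempty := by
    have hsub := Finset.card_le_card (Finset.filter_subset (fun w => d2 G x0 w ≠ d2 G y0 w) S)
    exact Finset.card_pos.mp (by omega)
  obtain ⟨w, hw⟩ := hSne
  set A : ℕ → Finset V := fun i => univ.filter (fun v => d2 G v w = i) with hA
  -- the two classes cover everything except w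
  have hsub : univ.erase w ⊆ A 1 ∪ A 2 := by
    intro v hv
    have hvw : v ≠ w := (Finset.mem_erase.mp hv).1
    rcases d2_one_or_two G hvw with h' | h' <;>
      simp [hA, Finset.mem_union, Finset.mem_filter, h']
  have hdisj : ∀ v, v ∈ A 1 → v ∈ A 2 → False := by
    intro v h1 h2
    have e1 : d2 G v w = 1 := (Finset.mem_filter.mp h1).2
    have e2 : d2 G v w = 2 := (Finset.mem_filter.mp h2).2
    omega
  have hsum : 6 ≤ (A 1).card + (A 2).card := by
    have h2 : (univ.erase w : Finset V).card = Fintype.card V - 1 := by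
      rw [Finset.card_erase_of_mem (Finset.mem_univ w), Finset.card_univ]
    have h3 : (univ.erase w : Finset V).card ≤ (A 1 ∪ A 2).card :=
      Finset.card_le_card hsub
    have h4 : (A 1 ∪ A 2).card ≤ (A 1).card + (A 2).card := Finset.card_union_le _ _
    omega
  -- key claim: any two distinct vertices in the same class are distinguished by
  -- exactly S.erase w
  have claim1 : ∀ i : ℕ, ∀ x y : V, x ∈ A i → y ∈ A i → x ≠ y →
      S.filter (fun z => d2 G x z ≠ d2 G y z) = S.erase w := by
    intro i x y hx hy hxy
    have hxw : d2 G x w = i := (Finset.mem_filter.mp hx).2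
    have hyw : d2 G y w = i := (Finset.mem_filter.mp hy).2
    apply Finset.eq_of_subset_of_card_le
    · intro z hz
      obtain ⟨hzS, hzd⟩ := Finset.mem_filter.mp hz
      refine Finset.mem_erase.mpr ⟨?_, hzS⟩
      rintro rfl
      exact hzd (by rw [hxw, hyw])
    · have h5 : k ≤ (S.filter (fun z => d2 G x z ≠ d2 G y z)).card := hgen x y hxy
      have h6 : (S.erase w).card = S.card - 1 := Finset.card_erase_of_mem hw
      have h7 : 1 ≤ S.card := Finset.card_pos.mpr ⟨w, hw⟩
      omega
  -- there is a pair in a common class, hence S.erase w is nonempty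
  have hpair : ∃ i : ℕ, ∃ x y : V, x ∈ A i ∧ y ∈ A i ∧ x ≠ y := by
    have : 2 ≤ (A 1).card ∨ 2 ≤ (A 2).card := by omega
    rcases this with h' | h'
    · obtain ⟨x, hx, y, hy, hxy⟩ := Finset.one_lt_card.mp h'
      exact ⟨1, x, y, hx, hy, hxy⟩
    · obtain ⟨x, hx, y, hy, hxy⟩ := Finset.one_lt_card.mp h'
      exact ⟨2, x, y, hx, hy, hxy⟩
  obtain ⟨i0, x1, y1, hx1, hy1, hxy1⟩ := hpair
  have hw'ex : (S.erase w).Nonempty := by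
    have h5 : k ≤ (S.filter (fun z => d2 G x1 z ≠ d2 G y1 z)).card :=
      hgen x1 y1 hxy1
    rw [claim1 i0 x1 y1 hx1 hy1 hxy1] at h5
    exact Finset.card_pos.mp (by omega)
  obtain ⟨w', hw'⟩ := hw'ex
  -- d2 · w' is injective on each class
  have hinj : ∀ i : ℕ, ∀ x y : V, x ∈ A i → y ∈ A i → x ≠ y →
      d2 G x w' ≠ d2 G y w' := by
    intro i x y hx hy hxy
    have h5 := claim1 i x y hx hy hxy
    have h6 : w' ∈ S.filter (fun z => d2 G x z ≠ d2 G y z) := by rw [h5]; exact hw'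
    exact (Finset.mem_filter.mp h6).2
  set f : V → ℕ := fun v => d2 G v w' with hf
  have himg : ∀ i : ℕ, (A i).image f ⊆ ({0, 1, 2} : Finset ℕ) := by
    intro i n hn
    obtain ⟨v, _, rfl⟩ := Finset.mem_image.mp hn
    have h9 : f v = d2 G v w' := rfl
    have := d2_le_two G v w'
    simp only [Finset.mem_insert, Finset.mem_singleton]
    omega
  have hcardimg : ∀ i : ℕ, ((A i).image f).card = (A i).card := by
    intro i
    apply Finset.card_image_of_injOn
    intro x hx y hy hfxy
    by_contra hne
    exact hinj i x y hx hy hne hfxy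
  have hle3 : ∀ i : ℕ, (A i).card ≤ 3 := by
    intro i
    have := Finset.card_le_card (himg i)
    have h012 : ({0, 1, 2} : Finset ℕ).card = 3 := by decide
    rw [hcardimg i] at this
    omega
  have hc1 : (A 1).card = 3 := by have := hle3 1; have := hle3 2; omega
  have hc2 : (A 2).card = 3 := by have := hle3 1; have := hle3 2; omega
  -- each class's image is all of {0,1,2}, so w' lies in both classes
  have hmem : ∀ i : ℕ, (A i).card = 3 → w' ∈ A i := by
    intro i hci
    have heq : (A i).image f = ({0, 1, 2} : Finset ℕ) := by
      apply Finset.eq_of_subset_of_card_le (himg i)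
      rw [hcardimg i, hci]
      decide
    have h0 : (0 : ℕ) ∈ (A i).image f := by rw [heq]; simp
    obtain ⟨v, hv, hfv⟩ := Finset.mem_image.mp h0
    have : v = w' := d2_eq_zero G hfv
    rwa [this] at hv
  exact hdisj w' (hmem 1 hc1) (hmem 2 hc2)

/-- Theorem 3.10: for any graph of order `n ≥ 7` and `1 ≤ k ≤ C(G)`,
`adim_k(G) ≥ k + 2`. -/
theorem adim_ge_k_add_two [Fintype V] (G : SimpleGraph V)
    (h : 7 ≤ Fintype.card V) (k : ℕ) (hk1 : 1 ≤ k) (hk2 : k ≤ Cmin G) :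
    k + 2 ≤ adim G k := by
  classical
  have hne : {n | ∃ S : Finset V, IsKAdjGen G k S ∧ S.card = n}.Nonempty := by
    refine ⟨(univ : Finset V).card, univ, ?_, rfl⟩
    intro x y hxy
    have h1 : Cmin G ≤ (CSet G x y).card := Nat.sInf_le ⟨x, y, hxy, rfl⟩
    exact le_trans (le_trans hk2 h1) (le_of_eq rfl)
  obtain ⟨S, hgen, hcard⟩ := Nat.sInf_mem hne
  rw [adim, ← hcard]
  by_contra h'
  push_neg at h'
  exact no_small_gen G h k hk1 S hgen (by omega)

end
end AdjDim
end

section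
/- For every integer n ≥ 4, the path graph P_n satisfies adim_2(P_n) = ⌈(n+1)/2⌉ and adim_3(P_n) = n − ⌊(n−4)/5⌋. -/
open Finset

namespace AdjDim

noncomputable section
open Classical

variable {V W : Type*}

lemma exists_sorted3 {T : Finset ℕ} {a b c : ℕ} (ha : a ∈ T) (hb : b ∈ T) (hc : c ∈ T)
    (hab : a ≠ b) (hac : a ≠ c) (hbc : b ≠ c) :
    ∃ p q r, p ∈ T ∧ q ∈ T ∧ r ∈ T ∧ p < q ∧ q < r ∧ r ≤ max a (max b c) := by
  rcases Nat.lt_trichotomy a b with h1 | h1 | h1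
  · rcases Nat.lt_trichotomy b c with h2 | h2 | h2
    · exact ⟨a, b, c, ha, hb, hc, h1, h2, by omega⟩
    · omega
    · rcases Nat.lt_trichotomy a c with h3 | h3 | h3
      · exact ⟨a, c, b, ha, hc, hb, h3, h2, by omega⟩
      · omega
      · exact ⟨c, a, b, hc, ha, hb, h3, h1, by omega⟩
  · omega
  · rcases Nat.lt_trichotomy a c with h2 | h2 | h2
    · exact ⟨b, a, c, hb, ha, hc, h1, h2, by omega⟩
    · omega
    · rcases Nat.lt_trichotomy b c with h3 | h3 | h3
      · exact ⟨b, c, a, hb, hc, ha, h3, h2, by omega⟩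
      · omega
      · exact ⟨c, b, a, hc, hb, ha, h3, h1, by omega⟩

/-- main inner arithmetic lemma for k = 2 lower bound -/
lemma L1 (m : ℕ) (T : Finset ℕ) (hsub : ∀ t ∈ T, t < m)
    (H3 : ∀ a b c, a ∈ T → b ∈ T → c ∈ T → a < b → b < c → c ≤ a + 4 → b = a + 2 ∧ c = a + 4)
    (Hb : ∀ a b, a ∈ T → b ∈ T → a < b → b ≤ 3 → a = 1 ∧ b = 3) :
    T.card ≤ (if m = 1 then 1 else m / 2) := by
  induction m using Nat.strong_induction_on generalizing T with
  | _ m IH =>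
  by_cases hm : m ≤ 5
  · -- base cases
    by_cases hm0 : m = 0
    · subst hm0
      have : T = ∅ := Finset.eq_empty_of_forall_notMem (fun t ht => by have := hsub t ht; omega)
      simp [this]
    by_cases hm1 : m ≤ 3
    · -- card ≤ 1
      have h1 : T.card ≤ 1 := by
        rw [Finset.card_le_one]
        intro u hu v hv
        by_contra hne
        rcases Nat.lt_or_ge u v with h | h
        · have h2 := hsub v hv
          have := Hb u v hu hv h (by omega); omega
        · have h2 := hsub u hu
          have hlt : v < u := by omega
          have := Hb v u hv hu hlt (by omega); omega
      split <;> omega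
    · -- m = 4 or 5 : card ≤ 2
      have h1 : T.card ≤ 2 := by
        by_contra hgt
        obtain ⟨a, b, c, ha, hb, hc, hab, hac, hbc⟩ :=
          Finset.two_lt_card_iff.mp (show 2 < T.card by omega)
        obtain ⟨p, q, r, hp, hq, hr, hpq, hqr, hrm⟩ := exists_sorted3 ha hb hc hab hac hbc
        have hra : r < m := hsub r hr
        have h3 := H3 p q r hp hq hr hpq hqr (show r ≤ p + 4 by omega)
        have hb2 := Hb p q hp hq hpq
        omega
      split <;> omega
  · -- m ≥ 6
    push_neg at hm
    by_cases hcase : m - 2 ∈ T ∧ m - 1 ∈ T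
    · -- peel 5
      have hkey : ∀ t ∈ T, t < m - 2 → t < m - 5 := by
        intro t ht hlt
        by_contra hge
        have h3 := H3 t (m-2) (m-1) ht hcase.1 hcase.2 (by omega) (by omega) (by omega)
        omega
      have hsplit := Finset.card_filter_add_card_filter_not (s := T) (p := (· < m - 5))
      have htop : T.filter (fun t => ¬ t < m - 5) ⊆ {m-2, m-1} := by
        intro t ht
        rw [Finset.mem_filter] at ht
        have h1 := hsub t ht.1
        have h2 := hkey t ht.1
        simp only [Finset.mem_insert, Finset.mem_singleton]
        omega
      have htopcard : (T.filter (fun t => ¬ t < m - 5)).card ≤ 2 :=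
        le_trans (Finset.card_le_card htop) (le_trans (Finset.card_insert_le _ _) (by simp))
      have hrec := IH (m - 5) (by omega) (T.filter (· < m - 5))
        (fun t ht => (Finset.mem_filter.mp ht).2)
        (fun a b c ha hb hc => H3 a b c (Finset.mem_filter.mp ha).1 (Finset.mem_filter.mp hb).1
          (Finset.mem_filter.mp hc).1)
        (fun a b ha hb => Hb a b (Finset.mem_filter.mp ha).1 (Finset.mem_filter.mp hb).1)
      by_cases h : m - 5 = 1
      · rw [if_pos h] at hrec; split <;> omega
      · rw [if_neg h] at hrec; split <;> omega
    · -- peel 2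
      have hsplit := Finset.card_filter_add_card_filter_not (s := T) (p := (· < m - 2))
      have htop : T.filter (fun t => ¬ t < m - 2) ⊆ {m-2, m-1} := by
        intro t ht
        rw [Finset.mem_filter] at ht
        have h1 := hsub t ht.1
        simp only [Finset.mem_insert, Finset.mem_singleton]
        omega
      have htopcard : (T.filter (fun t => ¬ t < m - 2)).card ≤ 1 := by
        rw [Finset.card_le_one]
        intro u hu v hv
        have hu' := htop hu
        have hv' := htop hv
        have hu2 := (Finset.mem_filter.mp hu).1
        have hv2 := (Finset.mem_filter.mp hv).1
        simp only [Finset.mem_insert, Finset.mem_singleton] at hu' hv'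
        rcases hu' with rfl | rfl <;> rcases hv' with rfl | rfl <;> first
          | rfl
          | (exfalso; exact hcase ⟨by assumption, by assumption⟩)
      have hrec := IH (m - 2) (by omega) (T.filter (· < m - 2))
        (fun t ht => (Finset.mem_filter.mp ht).2)
        (fun a b c ha hb hc => H3 a b c (Finset.mem_filter.mp ha).1 (Finset.mem_filter.mp hb).1
          (Finset.mem_filter.mp hc).1)
        (fun a b ha hb => Hb a b (Finset.mem_filter.mp ha).1 (Finset.mem_filter.mp hb).1)
      by_cases h : m - 2 = 1
      · rw [if_pos h] at hrec; split <;> omega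
      · rw [if_neg h] at hrec; split <;> omega

/-- top-level arithmetic lemma for k = 2 lower bound -/
lemma k2_arith (n : ℕ) (hn : 4 ≤ n) (T : Finset ℕ) (hsub : ∀ t ∈ T, t < n)
    (H3 : ∀ a b c, a ∈ T → b ∈ T → c ∈ T → a < b → b < c → c ≤ a + 4 → b = a + 2 ∧ c = a + 4)
    (Hb : ∀ a b, a ∈ T → b ∈ T → a < b → b ≤ 3 → a = 1 ∧ b = 3)
    (Ht : ∀ a b, a ∈ T → b ∈ T → a < b → n - 4 ≤ a → a = n - 4 ∧ b = n - 2) :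
    T.card ≤ (n - 1) / 2 := by
  by_cases hcase : n - 4 ∈ T ∧ n - 2 ∈ T
  · -- both extremal elements present
    obtain ⟨h4, h2⟩ := hcase
    -- n-3 and n-1 are not in T
    have hn3 : n - 3 ∉ T := by
      intro h
      have := Ht (n-4) (n-3) h4 h (by omega) (by omega)
      omega
    have hn1 : n - 1 ∉ T := by
      intro h
      have := Ht (n-2) (n-1) h2 h (by omega) (by omega)
      omega
    by_cases hn4 : n = 4
    · subst hn4
      have := Hb 0 2 h4 h2 (by omega) (by omega)
      omega
    by_cases hn56 : n ≤ 6
    · -- n = 5 or 6 : T ⊆ {n-4, n-2}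
      have hTsub : T ⊆ {n-4, n-2} := by
        intro t ht
        simp only [Finset.mem_insert, Finset.mem_singleton]
        by_contra hne
        push_neg at hne
        have htn := hsub t ht
        rcases Nat.lt_or_ge t (n-4) with hlt | hge
        · -- t < n-4, n ∈ {5,6}
          rcases Nat.lt_or_ge t 2 with h' | h'
          · have := Hb t (n-4) ht h4 (by omega) (by omega); omega
          · -- n = 6, t could be... t < n-4 ≤ 2 so t ≤ 1 always; contradiction
            omega
        · -- t > n-4, t ≠ n-2: t = n-3 or n-1
          have : t = n - 3 ∨ t = n - 1 := by omega
          rcases this with rfl | rfl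
          · exact hn3 ht
          · exact hn1 ht
      calc T.card ≤ ({n-4, n-2} : Finset ℕ).card := Finset.card_le_card hTsub
        _ ≤ 2 := le_trans (Finset.card_insert_le _ _) (by simp)
        _ ≤ (n - 1) / 2 := by omega
    · -- n ≥ 7
      push_neg at hn56
      have hn5 : n - 5 ∉ T := by
        intro h
        have := H3 (n-5) (n-4) (n-2) h h4 h2 (by omega) (by omega) (by omega)
        omega
      have hsplit := Finset.card_filter_add_card_filter_not (s := T) (p := (· < n - 5))
      have htop : T.filter (fun t => ¬ t < n - 5) ⊆ {n-4, n-2} := by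
        intro t ht
        rw [Finset.mem_filter] at ht
        have h1 := hsub t ht.1
        simp only [Finset.mem_insert, Finset.mem_singleton]
        rcases Nat.lt_or_ge t (n-4) with hlt | hge
        · exfalso
          have : t = n - 5 := by omega
          exact hn5 (this ▸ ht.1)
        · by_contra hne
          push_neg at hne
          have : t = n - 3 ∨ t = n - 1 := by omega
          rcases this with rfl | rfl
          · exact hn3 ht.1
          · exact hn1 ht.1
      have htopcard : (T.filter (fun t => ¬ t < n - 5)).card ≤ 2 :=
        le_trans (Finset.card_le_card htop) (le_trans (Finset.card_insert_le _ _) (by simp))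
      have hrec := L1 (n - 5) (T.filter (· < n - 5))
        (fun t ht => (Finset.mem_filter.mp ht).2)
        (fun a b c ha hb hc => H3 a b c (Finset.mem_filter.mp ha).1 (Finset.mem_filter.mp hb).1
          (Finset.mem_filter.mp hc).1)
        (fun a b ha hb => Hb a b (Finset.mem_filter.mp ha).1 (Finset.mem_filter.mp hb).1)
      rw [if_neg (by omega)] at hrec
      omega
  · -- at most one of n-4, n-2 in T: top part has at most 1 element
    have hsplit := Finset.card_filter_add_card_filter_not (s := T) (p := (· < n - 4))
    have htopcard : (T.filter (fun t => ¬ t < n - 4)).card ≤ 1 := by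
      rw [Finset.card_le_one]
      intro u hu v hv
      rw [Finset.mem_filter] at hu hv
      by_contra hne
      have hun := hsub u hu.1
      have hvn := hsub v hv.1
      rcases Nat.lt_or_ge u v with h | h
      · have := Ht u v hu.1 hv.1 h (by omega)
        exact hcase ⟨this.1 ▸ hu.1, this.2 ▸ hv.1⟩
      · have hlt : v < u := by omega
        have := Ht v u hv.1 hu.1 hlt (by omega)
        exact hcase ⟨this.1 ▸ hv.1, this.2 ▸ hu.1⟩
    have hrec := L1 (n - 4) (T.filter (· < n - 4))
      (fun t ht => (Finset.mem_filter.mp ht).2)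
      (fun a b c ha hb hc => H3 a b c (Finset.mem_filter.mp ha).1 (Finset.mem_filter.mp hb).1
        (Finset.mem_filter.mp hc).1)
      (fun a b ha hb => Hb a b (Finset.mem_filter.mp ha).1 (Finset.mem_filter.mp hb).1)
    by_cases h : n - 4 = 1
    · rw [if_pos h] at hrec; omega
    · rw [if_neg h] at hrec; omega

/-- arithmetic lemma for k = 3 lower bound -/
lemma k3_arith (n : ℕ) (T : Finset ℕ)
    (h1 : ∀ t ∈ T, 4 ≤ t ∧ t + 5 ≤ n)
    (h2 : ∀ a b, a ∈ T → b ∈ T → a < b → a + 5 ≤ b) :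
    T.card ≤ (n - 4) / 5 := by
  have hinj : Set.InjOn (fun t => (t - 4) / 5) T := by
    intro a ha b hb hab
    simp only at hab
    by_contra hne
    rcases Nat.lt_or_ge a b with h | h
    · have := h2 a b ha hb h
      have := (h1 a ha).1
      omega
    · have := h2 b a hb ha (by omega)
      have := (h1 b hb).1
      omega
  calc T.card = (T.image (fun t => (t - 4) / 5)).card := (Finset.card_image_of_injOn hinj).symm
    _ ≤ (Finset.range ((n - 4) / 5)).card := by
        apply Finset.card_le_card
        intro v hv
        simp only [Finset.mem_image] at hv
        obtain ⟨t, ht, rfl⟩ := hv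
        have := h1 t ht
        simp only [Finset.mem_range]
        omega
    _ = (n - 4) / 5 := Finset.card_range _

section Path
variable {n : ℕ}

lemma dist_iff (x y w : Fin n) (h : x.val ≠ y.val) :
    (d2 (SimpleGraph.pathGraph n) x w ≠ d2 (SimpleGraph.pathGraph n) y w) ↔
    (w.val = x.val ∨ w.val = y.val ∨
      ((x.val + 1 = w.val ∨ w.val + 1 = x.val) ↔ ¬(y.val + 1 = w.val ∨ w.val + 1 = y.val))) := by
  simp only [d2, SimpleGraph.pathGraph_adj, Fin.ext_iff]
  split_ifs <;> omega

/-- complement vals -/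
def TN (S : Finset (Fin n)) : Finset ℕ := (univ.filter (· ∉ S)).image Fin.val

lemma TN_lt {S : Finset (Fin n)} {t : ℕ} (ht : t ∈ TN S) : t < n := by
  simp only [TN, mem_image, mem_filter] at ht
  obtain ⟨u, _, rfl⟩ := ht; exact u.isLt

lemma TN_ne {S : Finset (Fin n)} {t : ℕ} (ht : t ∈ TN S) {w : Fin n} (hw : w ∈ S) :
    w.val ≠ t := by
  simp only [TN, mem_image, mem_filter] at ht
  obtain ⟨u, hu, rfl⟩ := ht
  intro hh
  exact hu.2 (Fin.val_injective hh ▸ hw)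

lemma TN_card {S : Finset (Fin n)} : S.card + (TN S).card = n := by
  have h1 : (TN S).card = (univ.filter (· ∉ S)).card :=
    Finset.card_image_of_injective _ Fin.val_injective
  have h2 : (univ.filter (· ∈ S)).card + (univ.filter (· ∉ S)).card = (univ : Finset (Fin n)).card :=
    Finset.card_filter_add_card_filter_not _
  have h3 : univ.filter (· ∈ S) = S := by ext w; simp
  simp only [h3, Finset.card_univ, Fintype.card_fin] at h2
  omega

lemma engine (S : Finset (Fin n)) {k : ℕ} (hS : IsKAdjGen (SimpleGraph.pathGraph n) k S)
    (x y : Fin n) (hlt : x.val < y.val) (W : Finset ℕ)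
    (hW : ∀ w : Fin n, w ∈ S → (d2 (SimpleGraph.pathGraph n) x w ≠ d2 (SimpleGraph.pathGraph n) y w) → w.val ∈ W) :
    k ≤ W.card := by
  refine le_trans (hS x y (Fin.ne_of_val_ne (Nat.ne_of_lt hlt))) ?_
  apply Finset.card_le_card_of_injOn Fin.val
  · intro w hw
    rw [Finset.mem_coe, Finset.mem_filter] at hw
    exact hW w hw.1 hw.2
  · exact Set.injOn_of_injective Fin.val_injective

lemma not_one_missing (S : Finset (Fin n)) {k : ℕ} (hk : 1 ≤ k)
    (hS : IsKAdjGen (SimpleGraph.pathGraph n) k S)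
    (x y : Fin n) (hlt : x.val < y.val) (base : Finset ℕ) (hbase : base.card ≤ k)
    (hW : ∀ w : Fin n, w ∈ S → (d2 (SimpleGraph.pathGraph n) x w ≠ d2 (SimpleGraph.pathGraph n) y w) → w.val ∈ base)
    {a : ℕ} (ha : a ∈ TN S) (haB : a ∈ base) : False := by
  have h := engine S hS x y hlt (base.erase a) (fun w hw hd => by
    exact Finset.mem_erase.mpr ⟨TN_ne ha hw, hW w hw hd⟩)
  rw [Finset.card_erase_of_mem haB] at h
  omega

lemma not_two_missing (S : Finset (Fin n)) {k : ℕ} (hk : 1 ≤ k)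
    (hS : IsKAdjGen (SimpleGraph.pathGraph n) k S)
    (x y : Fin n) (hlt : x.val < y.val) (base : Finset ℕ) (hbase : base.card ≤ k + 1)
    (hW : ∀ w : Fin n, w ∈ S → (d2 (SimpleGraph.pathGraph n) x w ≠ d2 (SimpleGraph.pathGraph n) y w) → w.val ∈ base)
    {a b : ℕ} (ha : a ∈ TN S) (hb : b ∈ TN S) (hab : a ≠ b) (haB : a ∈ base) (hbB : b ∈ base) :
    False := by
  have h := engine S hS x y hlt ((base.erase a).erase b) (fun w hw hd => by
    exact Finset.mem_erase.mpr ⟨TN_ne hb hw, Finset.mem_erase.mpr ⟨TN_ne ha hw, hW w hw hd⟩⟩)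
  rw [Finset.card_erase_of_mem (Finset.mem_erase.mpr ⟨Ne.symm hab, hbB⟩),
    Finset.card_erase_of_mem haB] at h
  have := Finset.card_pos.mpr ⟨a, haB⟩
  omega

lemma not_three_missing (S : Finset (Fin n)) {k : ℕ} (hk : 1 ≤ k)
    (hS : IsKAdjGen (SimpleGraph.pathGraph n) k S)
    (x y : Fin n) (hlt : x.val < y.val) (base : Finset ℕ) (hbase : base.card ≤ k + 2)
    (hW : ∀ w : Fin n, w ∈ S → (d2 (SimpleGraph.pathGraph n) x w ≠ d2 (SimpleGraph.pathGraph n) y w) → w.val ∈ base)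
    {a b c : ℕ} (ha : a ∈ TN S) (hb : b ∈ TN S) (hc : c ∈ TN S)
    (hab : a ≠ b) (hac : a ≠ c) (hbc : b ≠ c)
    (haB : a ∈ base) (hbB : b ∈ base) (hcB : c ∈ base) : False := by
  have h := engine S hS x y hlt (((base.erase a).erase b).erase c) (fun w hw hd => by
    exact Finset.mem_erase.mpr ⟨TN_ne hc hw, Finset.mem_erase.mpr ⟨TN_ne hb hw,
      Finset.mem_erase.mpr ⟨TN_ne ha hw, hW w hw hd⟩⟩⟩)
  rw [Finset.card_erase_of_mem (Finset.mem_erase.mpr ⟨Ne.symm hbc,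
        Finset.mem_erase.mpr ⟨Ne.symm hac, hcB⟩⟩),
    Finset.card_erase_of_mem (Finset.mem_erase.mpr ⟨Ne.symm hab, hbB⟩),
    Finset.card_erase_of_mem haB] at h
  have h1 := Finset.card_pos.mpr ⟨a, haB⟩
  have h2 : 2 ≤ base.card := Finset.one_lt_card.mpr ⟨a, haB, b, hbB, hab⟩
  omega

lemma card3_le (a b c : ℕ) : ({a, b, c} : Finset ℕ).card ≤ 3 :=
  le_trans (Finset.card_insert_le _ _)
    (by have := Finset.card_insert_le b ({c} : Finset ℕ); simp at this ⊢; omega)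

lemma card4_le (a b c d : ℕ) : ({a, b, c, d} : Finset ℕ).card ≤ 4 :=
  le_trans (Finset.card_insert_le _ _) (by have := card3_le b c d; omega)

lemma lower2_constraints (hn : 4 ≤ n) (S : Finset (Fin n))
    (hS : IsKAdjGen (SimpleGraph.pathGraph n) 2 S) :
    (∀ a b c, a ∈ TN S → b ∈ TN S → c ∈ TN S → a < b → b < c → c ≤ a + 4 →
      b = a + 2 ∧ c = a + 4) ∧
    (∀ a b, a ∈ TN S → b ∈ TN S → a < b → b ≤ 3 → a = 1 ∧ b = 3) ∧
    (∀ a b, a ∈ TN S → b ∈ TN S → a < b → n - 4 ≤ a → a = n - 4 ∧ b = n - 2) := by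
  refine ⟨?_, ?_, ?_⟩
  · -- H3
    intro a b c ha hb hc hab hbc hc4
    have hcn := TN_lt hc
    by_contra hne
    rw [not_and_or] at hne
    by_cases hspan : c ≤ a + 3
    · have hx : a + 1 < n := by omega
      have hy : a + 2 < n := by omega
      have hlt : (⟨a+1, hx⟩ : Fin n).val < (⟨a+2, hy⟩ : Fin n).val := by
        simp only [Fin.val_mk]; omega
      have hW : ∀ w : Fin n, w ∈ S →
          (d2 (SimpleGraph.pathGraph n) ⟨a+1, hx⟩ w ≠ d2 (SimpleGraph.pathGraph n) ⟨a+2, hy⟩ w) →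
          w.val ∈ ({a, a+1, a+2, a+3} : Finset ℕ) := by
        intro w hwS hd
        have hw := w.isLt
        rw [dist_iff _ _ _ (by simp only [Fin.val_mk]; omega)] at hd
        simp only [Fin.val_mk] at hd
        simp only [Finset.mem_insert, Finset.mem_singleton]
        omega
      have haB : a ∈ ({a, a+1, a+2, a+3} : Finset ℕ) := Finset.mem_insert_self a _
      have hbB : b ∈ ({a, a+1, a+2, a+3} : Finset ℕ) := by
        simp only [Finset.mem_insert, Finset.mem_singleton]; omega
      have hcB : c ∈ ({a, a+1, a+2, a+3} : Finset ℕ) := by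
        simp only [Finset.mem_insert, Finset.mem_singleton]; omega
      exact not_three_missing S (by omega) hS _ _ hlt _ (card4_le _ _ _ _) hW
        ha hb hc (by omega) (by omega) (by omega) haB hbB hcB
    · have hc4' : c = a + 4 := by omega
      have hb2 : b ≠ a + 2 := fun h => hne.elim (fun h' => h' h) (fun h' => h' hc4')
      have hx : a + 1 < n := by omega
      have hy : a + 3 < n := by omega
      have hlt : (⟨a+1, hx⟩ : Fin n).val < (⟨a+3, hy⟩ : Fin n).val := by
        simp only [Fin.val_mk]; omega
      have hW : ∀ w : Fin n, w ∈ S →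
          (d2 (SimpleGraph.pathGraph n) ⟨a+1, hx⟩ w ≠ d2 (SimpleGraph.pathGraph n) ⟨a+3, hy⟩ w) →
          w.val ∈ ({a, a+1, a+3, a+4} : Finset ℕ) := by
        intro w hwS hd
        have hw := w.isLt
        rw [dist_iff _ _ _ (by simp only [Fin.val_mk]; omega)] at hd
        simp only [Fin.val_mk] at hd
        simp only [Finset.mem_insert, Finset.mem_singleton]
        omega
      have haB : a ∈ ({a, a+1, a+3, a+4} : Finset ℕ) := Finset.mem_insert_self a _
      have hbB : b ∈ ({a, a+1, a+3, a+4} : Finset ℕ) := by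
        simp only [Finset.mem_insert, Finset.mem_singleton]; omega
      have hcB : c ∈ ({a, a+1, a+3, a+4} : Finset ℕ) := by
        simp only [Finset.mem_insert, Finset.mem_singleton]; omega
      exact not_three_missing S (by omega) hS _ _ hlt _ (card4_le _ _ _ _) hW
        ha hb hc (by omega) (by omega) (by omega) haB hbB hcB
  · -- Hb
    intro a b ha hb hab hb3
    by_contra hne
    by_cases hcase : b ≤ 2
    · have hx : (0:ℕ) < n := by omega
      have hy : (1:ℕ) < n := by omega
      have hlt : (⟨0, hx⟩ : Fin n).val < (⟨1, hy⟩ : Fin n).val := by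
        simp only [Fin.val_mk]; omega
      have hW : ∀ w : Fin n, w ∈ S →
          (d2 (SimpleGraph.pathGraph n) ⟨0, hx⟩ w ≠ d2 (SimpleGraph.pathGraph n) ⟨1, hy⟩ w) →
          w.val ∈ ({0, 1, 2} : Finset ℕ) := by
        intro w hwS hd
        have hw := w.isLt
        rw [dist_iff _ _ _ (by simp only [Fin.val_mk]; omega)] at hd
        simp only [Fin.val_mk] at hd
        simp only [Finset.mem_insert, Finset.mem_singleton]
        omega
      have haB : a ∈ ({0, 1, 2} : Finset ℕ) := by
        simp only [Finset.mem_insert, Finset.mem_singleton]; omega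
      have hbB : b ∈ ({0, 1, 2} : Finset ℕ) := by
        simp only [Finset.mem_insert, Finset.mem_singleton]; omega
      exact not_two_missing S (by omega) hS _ _ hlt _ (card3_le _ _ _) hW
        ha hb (by omega) haB hbB
    · have hx : (0:ℕ) < n := by omega
      have hy : (2:ℕ) < n := by omega
      have hlt : (⟨0, hx⟩ : Fin n).val < (⟨2, hy⟩ : Fin n).val := by
        simp only [Fin.val_mk]; omega
      have hW : ∀ w : Fin n, w ∈ S →
          (d2 (SimpleGraph.pathGraph n) ⟨0, hx⟩ w ≠ d2 (SimpleGraph.pathGraph n) ⟨2, hy⟩ w) →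
          w.val ∈ ({0, 2, 3} : Finset ℕ) := by
        intro w hwS hd
        have hw := w.isLt
        rw [dist_iff _ _ _ (by simp only [Fin.val_mk]; omega)] at hd
        simp only [Fin.val_mk] at hd
        simp only [Finset.mem_insert, Finset.mem_singleton]
        omega
      have haB : a ∈ ({0, 2, 3} : Finset ℕ) := by
        simp only [Finset.mem_insert, Finset.mem_singleton]; omega
      have hbB : b ∈ ({0, 2, 3} : Finset ℕ) := by
        simp only [Finset.mem_insert, Finset.mem_singleton]; omega
      exact not_two_missing S (by omega) hS _ _ hlt _ (card3_le _ _ _) hW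
        ha hb (by omega) haB hbB
  · -- Ht
    intro a b ha hb hab hta
    have hbn := TN_lt hb
    by_contra hne
    by_cases hcase : a = n - 4
    · have hx : n - 3 < n := by omega
      have hy : n - 1 < n := by omega
      have hlt : (⟨n-3, hx⟩ : Fin n).val < (⟨n-1, hy⟩ : Fin n).val := by
        simp only [Fin.val_mk]; omega
      have hW : ∀ w : Fin n, w ∈ S →
          (d2 (SimpleGraph.pathGraph n) ⟨n-3, hx⟩ w ≠ d2 (SimpleGraph.pathGraph n) ⟨n-1, hy⟩ w) →
          w.val ∈ ({n-4, n-3, n-1} : Finset ℕ) := by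
        intro w hwS hd
        have hw := w.isLt
        rw [dist_iff _ _ _ (by simp only [Fin.val_mk]; omega)] at hd
        simp only [Fin.val_mk] at hd
        simp only [Finset.mem_insert, Finset.mem_singleton]
        omega
      have haB : a ∈ ({n-4, n-3, n-1} : Finset ℕ) := by
        simp only [Finset.mem_insert, Finset.mem_singleton]; omega
      have hbB : b ∈ ({n-4, n-3, n-1} : Finset ℕ) := by
        simp only [Finset.mem_insert, Finset.mem_singleton]; omega
      exact not_two_missing S (by omega) hS _ _ hlt _ (card3_le _ _ _) hW
        ha hb (by omega) haB hbB
    · have hx : n - 2 < n := by omega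
      have hy : n - 1 < n := by omega
      have hlt : (⟨n-2, hx⟩ : Fin n).val < (⟨n-1, hy⟩ : Fin n).val := by
        simp only [Fin.val_mk]; omega
      have hW : ∀ w : Fin n, w ∈ S →
          (d2 (SimpleGraph.pathGraph n) ⟨n-2, hx⟩ w ≠ d2 (SimpleGraph.pathGraph n) ⟨n-1, hy⟩ w) →
          w.val ∈ ({n-3, n-2, n-1} : Finset ℕ) := by
        intro w hwS hd
        have hw := w.isLt
        rw [dist_iff _ _ _ (by simp only [Fin.val_mk]; omega)] at hd
        simp only [Fin.val_mk] at hd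
        simp only [Finset.mem_insert, Finset.mem_singleton]
        omega
      have haB : a ∈ ({n-3, n-2, n-1} : Finset ℕ) := by
        simp only [Finset.mem_insert, Finset.mem_singleton]; omega
      have hbB : b ∈ ({n-3, n-2, n-1} : Finset ℕ) := by
        simp only [Finset.mem_insert, Finset.mem_singleton]; omega
      exact not_two_missing S (by omega) hS _ _ hlt _ (card3_le _ _ _) hW
        ha hb (by omega) haB hbB

lemma lower3_constraints (hn : 4 ≤ n) (S : Finset (Fin n))
    (hS : IsKAdjGen (SimpleGraph.pathGraph n) 3 S) :
    (∀ t ∈ TN S, 4 ≤ t ∧ t + 5 ≤ n) ∧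
    (∀ a b, a ∈ TN S → b ∈ TN S → a < b → a + 5 ≤ b) := by
  have h1 : ∀ t ∈ TN S, 4 ≤ t ∧ t + 5 ≤ n := by
    intro t ht
    have htn := TN_lt ht
    by_contra hne
    rw [not_and_or] at hne
    have hcases : t ≤ 2 ∨ t = 3 ∨ t = n - 4 ∨ n - 3 ≤ t := by omega
    rcases hcases with hc | hc | hc | hc
    · have hx : (0:ℕ) < n := by omega
      have hy : (1:ℕ) < n := by omega
      have hlt : (⟨0, hx⟩ : Fin n).val < (⟨1, hy⟩ : Fin n).val := by
        simp only [Fin.val_mk]; omega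
      have hW : ∀ w : Fin n, w ∈ S →
          (d2 (SimpleGraph.pathGraph n) ⟨0, hx⟩ w ≠ d2 (SimpleGraph.pathGraph n) ⟨1, hy⟩ w) →
          w.val ∈ ({0, 1, 2} : Finset ℕ) := by
        intro w hwS hd
        have hw := w.isLt
        rw [dist_iff _ _ _ (by simp only [Fin.val_mk]; omega)] at hd
        simp only [Fin.val_mk] at hd
        simp only [Finset.mem_insert, Finset.mem_singleton]
        omega
      have htB : t ∈ ({0, 1, 2} : Finset ℕ) := by
        simp only [Finset.mem_insert, Finset.mem_singleton]; omega
      exact not_one_missing S (by omega) hS _ _ hlt _ (card3_le _ _ _) hW ht htB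
    · have hx : (0:ℕ) < n := by omega
      have hy : (2:ℕ) < n := by omega
      have hlt : (⟨0, hx⟩ : Fin n).val < (⟨2, hy⟩ : Fin n).val := by
        simp only [Fin.val_mk]; omega
      have hW : ∀ w : Fin n, w ∈ S →
          (d2 (SimpleGraph.pathGraph n) ⟨0, hx⟩ w ≠ d2 (SimpleGraph.pathGraph n) ⟨2, hy⟩ w) →
          w.val ∈ ({0, 2, 3} : Finset ℕ) := by
        intro w hwS hd
        have hw := w.isLt
        rw [dist_iff _ _ _ (by simp only [Fin.val_mk]; omega)] at hd
        simp only [Fin.val_mk] at hd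
        simp only [Finset.mem_insert, Finset.mem_singleton]
        omega
      have htB : t ∈ ({0, 2, 3} : Finset ℕ) := by
        simp only [Finset.mem_insert, Finset.mem_singleton]; omega
      exact not_one_missing S (by omega) hS _ _ hlt _ (card3_le _ _ _) hW ht htB
    · have hx : n - 3 < n := by omega
      have hy : n - 1 < n := by omega
      have hlt : (⟨n-3, hx⟩ : Fin n).val < (⟨n-1, hy⟩ : Fin n).val := by
        simp only [Fin.val_mk]; omega
      have hW : ∀ w : Fin n, w ∈ S →
          (d2 (SimpleGraph.pathGraph n) ⟨n-3, hx⟩ w ≠ d2 (SimpleGraph.pathGraph n) ⟨n-1, hy⟩ w) →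
          w.val ∈ ({n-4, n-3, n-1} : Finset ℕ) := by
        intro w hwS hd
        have hw := w.isLt
        rw [dist_iff _ _ _ (by simp only [Fin.val_mk]; omega)] at hd
        simp only [Fin.val_mk] at hd
        simp only [Finset.mem_insert, Finset.mem_singleton]
        omega
      have htB : t ∈ ({n-4, n-3, n-1} : Finset ℕ) := by
        simp only [Finset.mem_insert, Finset.mem_singleton]; omega
      exact not_one_missing S (by omega) hS _ _ hlt _ (card3_le _ _ _) hW ht htB
    · have hx : n - 2 < n := by omega
      have hy : n - 1 < n := by omega
      have hlt : (⟨n-2, hx⟩ : Fin n).val < (⟨n-1, hy⟩ : Fin n).val := by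
        simp only [Fin.val_mk]; omega
      have hW : ∀ w : Fin n, w ∈ S →
          (d2 (SimpleGraph.pathGraph n) ⟨n-2, hx⟩ w ≠ d2 (SimpleGraph.pathGraph n) ⟨n-1, hy⟩ w) →
          w.val ∈ ({n-3, n-2, n-1} : Finset ℕ) := by
        intro w hwS hd
        have hw := w.isLt
        rw [dist_iff _ _ _ (by simp only [Fin.val_mk]; omega)] at hd
        simp only [Fin.val_mk] at hd
        simp only [Finset.mem_insert, Finset.mem_singleton]
        omega
      have htB : t ∈ ({n-3, n-2, n-1} : Finset ℕ) := by
        simp only [Finset.mem_insert, Finset.mem_singleton]; omega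
      exact not_one_missing S (by omega) hS _ _ hlt _ (card3_le _ _ _) hW ht htB
  refine ⟨h1, ?_⟩
  intro a b ha hb hab
  have ha1 := h1 a ha
  have hb1 := h1 b hb
  by_contra hne
  by_cases hspan : b ≤ a + 3
  · have hx : a + 1 < n := by omega
    have hy : a + 2 < n := by omega
    have hlt : (⟨a+1, hx⟩ : Fin n).val < (⟨a+2, hy⟩ : Fin n).val := by
      simp only [Fin.val_mk]; omega
    have hW : ∀ w : Fin n, w ∈ S →
        (d2 (SimpleGraph.pathGraph n) ⟨a+1, hx⟩ w ≠ d2 (SimpleGraph.pathGraph n) ⟨a+2, hy⟩ w) →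
        w.val ∈ ({a, a+1, a+2, a+3} : Finset ℕ) := by
      intro w hwS hd
      have hw := w.isLt
      rw [dist_iff _ _ _ (by simp only [Fin.val_mk]; omega)] at hd
      simp only [Fin.val_mk] at hd
      simp only [Finset.mem_insert, Finset.mem_singleton]
      omega
    have haB : a ∈ ({a, a+1, a+2, a+3} : Finset ℕ) := Finset.mem_insert_self a _
    have hbB : b ∈ ({a, a+1, a+2, a+3} : Finset ℕ) := by
      simp only [Finset.mem_insert, Finset.mem_singleton]; omega
    exact not_two_missing S (by omega) hS _ _ hlt _ (card4_le _ _ _ _) hW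
      ha hb (by omega) haB hbB
  · have hb4 : b = a + 4 := by omega
    have hx : a + 1 < n := by omega
    have hy : a + 3 < n := by omega
    have hlt : (⟨a+1, hx⟩ : Fin n).val < (⟨a+3, hy⟩ : Fin n).val := by
      simp only [Fin.val_mk]; omega
    have hW : ∀ w : Fin n, w ∈ S →
        (d2 (SimpleGraph.pathGraph n) ⟨a+1, hx⟩ w ≠ d2 (SimpleGraph.pathGraph n) ⟨a+3, hy⟩ w) →
        w.val ∈ ({a, a+1, a+3, a+4} : Finset ℕ) := by
      intro w hwS hd
      have hw := w.isLt
      rw [dist_iff _ _ _ (by simp only [Fin.val_mk]; omega)] at hd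
      simp only [Fin.val_mk] at hd
      simp only [Finset.mem_insert, Finset.mem_singleton]
      omega
    have haB : a ∈ ({a, a+1, a+3, a+4} : Finset ℕ) := Finset.mem_insert_self a _
    have hbB : b ∈ ({a, a+1, a+3, a+4} : Finset ℕ) := by
      simp only [Finset.mem_insert, Finset.mem_singleton]; omega
    exact not_two_missing S (by omega) hS _ _ hlt _ (card4_le _ _ _ _) hW
      ha hb (by omega) haB hbB

lemma gen_of_lt {k : ℕ} (S : Finset (Fin n))
    (H : ∀ x y : Fin n, x.val < y.val →
      k ≤ (S.filter (fun w => d2 (SimpleGraph.pathGraph n) x w ≠ d2 (SimpleGraph.pathGraph n) y w)).card) :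
    IsKAdjGen (SimpleGraph.pathGraph n) k S := by
  intro x y hxy
  have hne : x.val ≠ y.val := fun h => hxy (Fin.val_injective h)
  rcases Nat.lt_or_ge x.val y.val with h | h
  · exact H x y h
  · have h' : y.val < x.val := by omega
    have hH := H y x h'
    have heq : S.filter (fun w => d2 (SimpleGraph.pathGraph n) x w ≠ d2 (SimpleGraph.pathGraph n) y w)
        = S.filter (fun w => d2 (SimpleGraph.pathGraph n) y w ≠ d2 (SimpleGraph.pathGraph n) x w) := by
      apply Finset.filter_congr
      intro w _
      exact ne_comm
    rw [heq]
    exact hH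

/-- the 2-adjacency generator -/
def S2 : Finset (Fin n) := univ.filter (fun w => w.val % 2 = 0 ∨ w.val = n - 1)

lemma mem_S2 (w : Fin n) : w ∈ (S2 : Finset (Fin n)) ↔ (w.val % 2 = 0 ∨ w.val = n - 1) := by
  simp [S2]

lemma two_le_of (F : Finset (Fin n)) (u v : Fin n) (hne : u.val ≠ v.val)
    (hu : u ∈ F) (hv : v ∈ F) : 2 ≤ F.card :=
  Finset.one_lt_card.mpr ⟨u, hu, v, hv, fun h => hne (congrArg Fin.val h)⟩

lemma gen2 (hn : 4 ≤ n) : IsKAdjGen (SimpleGraph.pathGraph n) 2 (S2 : Finset (Fin n)) := by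
  apply gen_of_lt
  intro x y hlt
  have hbn := y.isLt
  have hxy' : x.val ≠ y.val := by omega
  have memF : ∀ w : Fin n, (w.val % 2 = 0 ∨ w.val = n - 1) →
      (w.val = x.val ∨ w.val = y.val ∨
        ((x.val + 1 = w.val ∨ w.val + 1 = x.val) ↔ ¬(y.val + 1 = w.val ∨ w.val + 1 = y.val))) →
      w ∈ S2.filter (fun w => d2 (SimpleGraph.pathGraph n) x w ≠ d2 (SimpleGraph.pathGraph n) y w) :=
    fun w h1 h2 => Finset.mem_filter.mpr ⟨(mem_S2 w).mpr h1, (dist_iff x y w hxy').mpr h2⟩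
  by_cases h1 : y.val = x.val + 1
  · by_cases h2 : x.val % 2 = 0
    · by_cases h3 : x.val + 2 < n
      · refine two_le_of _ x ⟨x.val + 2, h3⟩ (by first | omega | (simp only [Fin.val_mk]; omega))
          (memF x (Or.inl h2) (Or.inl rfl))
          (memF _ (Or.inl (by first | omega | (simp only [Fin.val_mk]; omega)))
            (by first | omega | (simp only [Fin.val_mk]; omega)))
      · -- y = n-1
        exact two_le_of _ x y (by omega)
          (memF x (Or.inl h2) (Or.inl rfl))
          (memF y (Or.inr (by omega)) (Or.inr (Or.inl rfl)))
    · -- x odd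
      refine two_le_of _ ⟨x.val - 1, by omega⟩ y (by first | omega | (simp only [Fin.val_mk]; omega))
        (memF _ (Or.inl (by first | omega | (simp only [Fin.val_mk]; omega)))
          (by first | omega | (simp only [Fin.val_mk]; omega)))
        (memF y (Or.inl (by omega)) (Or.inr (Or.inl rfl)))
  by_cases h1' : y.val = x.val + 2
  · by_cases h2 : x.val % 2 = 0
    · exact two_le_of _ x y (by omega)
        (memF x (Or.inl h2) (Or.inl rfl))
        (memF y (Or.inl (by omega)) (Or.inr (Or.inl rfl)))
    · by_cases h3 : x.val + 3 < n
      · refine two_le_of _ ⟨x.val - 1, by omega⟩ ⟨x.val + 3, h3⟩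
          (by first | omega | (simp only [Fin.val_mk]; omega))
          (memF _ (Or.inl (by first | omega | (simp only [Fin.val_mk]; omega)))
            (by first | omega | (simp only [Fin.val_mk]; omega)))
          (memF _ (Or.inl (by first | omega | (simp only [Fin.val_mk]; omega)))
            (by first | omega | (simp only [Fin.val_mk]; omega)))
      · -- y = n-1
        refine two_le_of _ ⟨x.val - 1, by omega⟩ y (by first | omega | (simp only [Fin.val_mk]; omega))
          (memF _ (Or.inl (by first | omega | (simp only [Fin.val_mk]; omega)))
            (by first | omega | (simp only [Fin.val_mk]; omega)))
          (memF y (Or.inr (by omega)) (Or.inr (Or.inl rfl)))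
  · -- y ≥ x + 3
    have hfar : x.val + 3 ≤ y.val := by omega
    have hw1 : ∃ w1 : Fin n, w1.val ≤ x.val ∧
        w1 ∈ S2.filter (fun w => d2 (SimpleGraph.pathGraph n) x w ≠ d2 (SimpleGraph.pathGraph n) y w) := by
      by_cases h2 : x.val % 2 = 0
      · exact ⟨x, le_refl _, memF x (Or.inl h2) (Or.inl rfl)⟩
      · refine ⟨⟨x.val - 1, by omega⟩, by simp only [Fin.val_mk]; omega,
          memF _ (Or.inl (by first | omega | (simp only [Fin.val_mk]; omega)))
            (by first | omega | (simp only [Fin.val_mk]; omega))⟩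
    have hw2 : ∃ w2 : Fin n, y.val ≤ w2.val ∧
        w2 ∈ S2.filter (fun w => d2 (SimpleGraph.pathGraph n) x w ≠ d2 (SimpleGraph.pathGraph n) y w) := by
      by_cases h4 : y.val % 2 = 0
      · exact ⟨y, le_refl _, memF y (Or.inl h4) (Or.inr (Or.inl rfl))⟩
      · by_cases h5 : y.val + 1 < n
        · refine ⟨⟨y.val + 1, h5⟩, by simp only [Fin.val_mk]; omega,
            memF _ (Or.inl (by first | omega | (simp only [Fin.val_mk]; omega)))
              (Or.inr (Or.inr (iff_of_false (by first | omega | (simp only [Fin.val_mk]; omega))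
                (not_not_intro (Or.inl rfl)))))⟩
        · exact ⟨y, le_refl _, memF y (Or.inr (by omega)) (Or.inr (Or.inl rfl))⟩
    obtain ⟨w1, hw1v, hw1m⟩ := hw1
    obtain ⟨w2, hw2v, hw2m⟩ := hw2
    exact two_le_of _ w1 w2 (by omega) hw1m hw2m

lemma card3_ge (v1 v2 v3 : Fin n) (h12 : v1.val ≠ v2.val) (h13 : v1.val ≠ v3.val) (h23 : v2.val ≠ v3.val) :
    3 ≤ (({v1, v2, v3} : Finset (Fin n)).card) := by
  rw [Finset.card_insert_of_notMem (by simp only [Finset.mem_insert, Finset.mem_singleton, Fin.ext_iff]; omega)]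
  rw [Finset.card_insert_of_notMem (by simp only [Finset.mem_insert, Finset.mem_singleton, Fin.ext_iff]; omega)]
  simp

lemma card4_ge (v1 v2 v3 v4 : Fin n) (h12 : v1.val ≠ v2.val) (h13 : v1.val ≠ v3.val) (h14 : v1.val ≠ v4.val) (h23 : v2.val ≠ v3.val) (h24 : v2.val ≠ v4.val) (h34 : v3.val ≠ v4.val) :
    4 ≤ (({v1, v2, v3, v4} : Finset (Fin n)).card) := by
  rw [Finset.card_insert_of_notMem (by simp only [Finset.mem_insert, Finset.mem_singleton, Fin.ext_iff]; omega)]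
  rw [Finset.card_insert_of_notMem (by simp only [Finset.mem_insert, Finset.mem_singleton, Fin.ext_iff]; omega)]
  rw [Finset.card_insert_of_notMem (by simp only [Finset.mem_insert, Finset.mem_singleton, Fin.ext_iff]; omega)]
  simp

lemma card5_ge (v1 v2 v3 v4 v5 : Fin n) (h12 : v1.val ≠ v2.val) (h13 : v1.val ≠ v3.val) (h14 : v1.val ≠ v4.val) (h15 : v1.val ≠ v5.val) (h23 : v2.val ≠ v3.val) (h24 : v2.val ≠ v4.val) (h25 : v2.val ≠ v5.val) (h34 : v3.val ≠ v4.val) (h35 : v3.val ≠ v5.val) (h45 : v4.val ≠ v5.val) :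
    5 ≤ (({v1, v2, v3, v4, v5} : Finset (Fin n)).card) := by
  rw [Finset.card_insert_of_notMem (by simp only [Finset.mem_insert, Finset.mem_singleton, Fin.ext_iff]; omega)]
  rw [Finset.card_insert_of_notMem (by simp only [Finset.mem_insert, Finset.mem_singleton, Fin.ext_iff]; omega)]
  rw [Finset.card_insert_of_notMem (by simp only [Finset.mem_insert, Finset.mem_singleton, Fin.ext_iff]; omega)]
  rw [Finset.card_insert_of_notMem (by simp only [Finset.mem_insert, Finset.mem_singleton, Fin.ext_iff]; omega)]
  simp

lemma card6_ge (v1 v2 v3 v4 v5 v6 : Fin n) (h12 : v1.val ≠ v2.val) (h13 : v1.val ≠ v3.val) (h14 : v1.val ≠ v4.val) (h15 : v1.val ≠ v5.val) (h16 : v1.val ≠ v6.val) (h23 : v2.val ≠ v3.val) (h24 : v2.val ≠ v4.val) (h25 : v2.val ≠ v5.val) (h26 : v2.val ≠ v6.val) (h34 : v3.val ≠ v4.val) (h35 : v3.val ≠ v5.val) (h36 : v3.val ≠ v6.val) (h45 : v4.val ≠ v5.val) (h46 : v4.val ≠ v6.val) (h56 : v5.val ≠ v6.val) :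
    6 ≤ (({v1, v2, v3, v4, v5, v6} : Finset (Fin n)).card) := by
  rw [Finset.card_insert_of_notMem (by simp only [Finset.mem_insert, Finset.mem_singleton, Fin.ext_iff]; omega)]
  rw [Finset.card_insert_of_notMem (by simp only [Finset.mem_insert, Finset.mem_singleton, Fin.ext_iff]; omega)]
  rw [Finset.card_insert_of_notMem (by simp only [Finset.mem_insert, Finset.mem_singleton, Fin.ext_iff]; omega)]
  rw [Finset.card_insert_of_notMem (by simp only [Finset.mem_insert, Finset.mem_singleton, Fin.ext_iff]; omega)]
  rw [Finset.card_insert_of_notMem (by simp only [Finset.mem_insert, Finset.mem_singleton, Fin.ext_iff]; omega)]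
  simp


lemma count_helper (S F W : Finset (Fin n)) (k m : ℕ) (hW : k + m ≤ W.card)
    (hT : (W.filter (fun w => w ∉ S)).card ≤ m)
    (hsub : ∀ w ∈ W, w ∈ S → w ∈ F) : k ≤ F.card := by
  have h1 := Finset.card_filter_add_card_filter_not (s := W) (p := fun w => w ∈ S)
  have h2 : W.filter (fun w => w ∈ S) ⊆ F := fun w hw => by
    rw [Finset.mem_filter] at hw; exact hsub w hw.1 hw.2
  have h3 := Finset.card_le_card h2
  omega

lemma card_le_two {α : Type*} {s : Finset α}
    (h : ∀ a b c, a ∈ s → b ∈ s → c ∈ s → a = b ∨ a = c ∨ b = c) : s.card ≤ 2 := by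
  by_contra h'
  obtain ⟨a, b, c, ha, hb, hc, hab, hac, hbc⟩ := Finset.two_lt_card_iff.mp (show 2 < s.card by omega)
  rcases h a b c ha hb hc with h | h | h
  · exact hab h
  · exact hac h
  · exact hbc h

/-- the 3-adjacency generator -/
def S3 : Finset (Fin n) := univ.filter (fun w => ¬(w.val % 5 = 4 ∧ w.val + 5 ≤ n))

lemma mem_S3 (w : Fin n) : w ∈ (S3 : Finset (Fin n)) ↔ ¬(w.val % 5 = 4 ∧ w.val + 5 ≤ n) := by
  simp [S3]

lemma not_mem_S3 (w : Fin n) : w ∉ (S3 : Finset (Fin n)) ↔ (w.val % 5 = 4 ∧ w.val + 5 ≤ n) := by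
  simp [S3]

lemma gen3 (hn : 4 ≤ n) : IsKAdjGen (SimpleGraph.pathGraph n) 3 (S3 : Finset (Fin n)) := by
  apply gen_of_lt
  intro x y hlt
  have hbn := y.isLt
  have hxy' : x.val ≠ y.val := by omega
  have memF : ∀ w : Fin n, w ∈ (S3 : Finset (Fin n)) →
      (w.val = x.val ∨ w.val = y.val ∨
        ((x.val + 1 = w.val ∨ w.val + 1 = x.val) ↔ ¬(y.val + 1 = w.val ∨ w.val + 1 = y.val))) →
      w ∈ S3.filter (fun w => d2 (SimpleGraph.pathGraph n) x w ≠ d2 (SimpleGraph.pathGraph n) y w) :=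
    fun w h1 h2 => Finset.mem_filter.mpr ⟨h1, (dist_iff x y w hxy').mpr h2⟩
  by_cases h1 : y.val = x.val + 1
  · by_cases ha0 : x.val = 0
    · -- W = {x, y, 2}
      have h2n : (2:ℕ) < n := by omega
      refine count_helper S3 _ ({x, y, ⟨2, h2n⟩} : Finset (Fin n)) 3 0
        (card3_ge _ _ _ (by omega) (by first | omega | (simp only [Fin.val_mk]; omega)) (by first | omega | (simp only [Fin.val_mk]; omega))) ?_ ?_
      · refine Nat.le_zero.mpr (Finset.card_eq_zero.mpr (Finset.filter_eq_empty_iff.mpr ?_))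
        intro w hw
        simp only [Finset.mem_insert, Finset.mem_singleton] at hw
        have hv : w.val = 0 ∨ w.val = 1 ∨ w.val = 2 := by
          rcases hw with rfl | rfl | rfl <;> first | simp | (simp only [Fin.val_mk]; omega) | omega
        rw [not_not, mem_S3]
        omega
      · intro w hw hwS
        simp only [Finset.mem_insert, Finset.mem_singleton] at hw
        have hv : w.val = 0 ∨ w.val = 1 ∨ w.val = 2 := by
          rcases hw with rfl | rfl | rfl <;> first | simp | (simp only [Fin.val_mk]; omega) | omega
        exact memF w hwS (by omega)
    · by_cases hend : x.val + 2 < n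
      · -- interior: W = {x-1, x, y, x+2}
        refine count_helper S3 _ ({⟨x.val - 1, by omega⟩, x, y, ⟨x.val + 2, hend⟩} : Finset (Fin n)) 3 1
          (card4_ge _ _ _ _ (by first | omega | (simp only [Fin.val_mk]; omega)) (by first | omega | (simp only [Fin.val_mk]; omega))
            (by first | omega | (simp only [Fin.val_mk]; omega)) (by first | omega | (simp only [Fin.val_mk]; omega))
            (by first | omega | (simp only [Fin.val_mk]; omega)) (by first | omega | (simp only [Fin.val_mk]; omega))) ?_ ?_
        · rw [Finset.card_le_one]
          intro u hu v hv
          rw [Finset.mem_filter] at hu hv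
          have hu2 := (not_mem_S3 u).mp hu.2
          have hv2 := (not_mem_S3 v).mp hv.2
          have hu1 := hu.1
          have hv1 := hv.1
          simp only [Finset.mem_insert, Finset.mem_singleton] at hu1 hv1
          have huv : u.val = x.val - 1 ∨ u.val = x.val ∨ u.val = y.val ∨ u.val = x.val + 2 := by
            rcases hu1 with rfl | rfl | rfl | rfl <;> first | simp | (simp only [Fin.val_mk]; omega) | omega
          have hvv : v.val = x.val - 1 ∨ v.val = x.val ∨ v.val = y.val ∨ v.val = x.val + 2 := by
            rcases hv1 with rfl | rfl | rfl | rfl <;> first | simp | (simp only [Fin.val_mk]; omega) | omega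
          exact Fin.val_injective (by omega)
        · intro w hw hwS
          simp only [Finset.mem_insert, Finset.mem_singleton] at hw
          have hv : w.val = x.val - 1 ∨ w.val = x.val ∨ w.val = y.val ∨ w.val = x.val + 2 := by
            rcases hw with rfl | rfl | rfl | rfl <;> first | simp | (simp only [Fin.val_mk]; omega) | omega
          exact memF w hwS (by omega)
      · -- top end: W = {x-1, x, y}, values n-3, n-2, n-1
        refine count_helper S3 _ ({⟨x.val - 1, by omega⟩, x, y} : Finset (Fin n)) 3 0
          (card3_ge _ _ _ (by first | omega | (simp only [Fin.val_mk]; omega)) (by first | omega | (simp only [Fin.val_mk]; omega))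
            (by omega)) ?_ ?_
        · refine Nat.le_zero.mpr (Finset.card_eq_zero.mpr (Finset.filter_eq_empty_iff.mpr ?_))
          intro w hw
          simp only [Finset.mem_insert, Finset.mem_singleton] at hw
          have hv : w.val = x.val - 1 ∨ w.val = x.val ∨ w.val = y.val := by
            rcases hw with rfl | rfl | rfl <;> first | simp | (simp only [Fin.val_mk]; omega) | omega
          rw [not_not, mem_S3]
          omega
        · intro w hw hwS
          simp only [Finset.mem_insert, Finset.mem_singleton] at hw
          have hv : w.val = x.val - 1 ∨ w.val = x.val ∨ w.val = y.val := by
            rcases hw with rfl | rfl | rfl <;> first | simp | (simp only [Fin.val_mk]; omega) | omega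
          exact memF w hwS (by omega)
  by_cases h1' : y.val = x.val + 2
  · by_cases ha0 : x.val = 0
    · -- W = {x, y, 3}, values 0, 2, 3
      have h3n : (3:ℕ) < n := by omega
      refine count_helper S3 _ ({x, y, ⟨3, h3n⟩} : Finset (Fin n)) 3 0
        (card3_ge _ _ _ (by omega) (by first | omega | (simp only [Fin.val_mk]; omega)) (by first | omega | (simp only [Fin.val_mk]; omega))) ?_ ?_
      · refine Nat.le_zero.mpr (Finset.card_eq_zero.mpr (Finset.filter_eq_empty_iff.mpr ?_))
        intro w hw
        simp only [Finset.mem_insert, Finset.mem_singleton] at hw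
        have hv : w.val = 0 ∨ w.val = 2 ∨ w.val = 3 := by
          rcases hw with rfl | rfl | rfl <;> first | simp | (simp only [Fin.val_mk]; omega) | omega
        rw [not_not, mem_S3]
        omega
      · intro w hw hwS
        simp only [Finset.mem_insert, Finset.mem_singleton] at hw
        have hv : w.val = 0 ∨ w.val = 2 ∨ w.val = 3 := by
          rcases hw with rfl | rfl | rfl <;> first | simp | (simp only [Fin.val_mk]; omega) | omega
        exact memF w hwS (by omega)
    · by_cases hend : x.val + 3 < n
      · -- interior: W = {x-1, x, y, x+3}
        refine count_helper S3 _ ({⟨x.val - 1, by omega⟩, x, y, ⟨x.val + 3, hend⟩} : Finset (Fin n)) 3 1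
          (card4_ge _ _ _ _ (by first | omega | (simp only [Fin.val_mk]; omega)) (by first | omega | (simp only [Fin.val_mk]; omega))
            (by first | omega | (simp only [Fin.val_mk]; omega)) (by first | omega | (simp only [Fin.val_mk]; omega))
            (by first | omega | (simp only [Fin.val_mk]; omega)) (by first | omega | (simp only [Fin.val_mk]; omega))) ?_ ?_
        · rw [Finset.card_le_one]
          intro u hu v hv
          rw [Finset.mem_filter] at hu hv
          have hu2 := (not_mem_S3 u).mp hu.2
          have hv2 := (not_mem_S3 v).mp hv.2
          have hu1 := hu.1
          have hv1 := hv.1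
          simp only [Finset.mem_insert, Finset.mem_singleton] at hu1 hv1
          have huv : u.val = x.val - 1 ∨ u.val = x.val ∨ u.val = y.val ∨ u.val = x.val + 3 := by
            rcases hu1 with rfl | rfl | rfl | rfl <;> first | simp | (simp only [Fin.val_mk]; omega) | omega
          have hvv : v.val = x.val - 1 ∨ v.val = x.val ∨ v.val = y.val ∨ v.val = x.val + 3 := by
            rcases hv1 with rfl | rfl | rfl | rfl <;> first | simp | (simp only [Fin.val_mk]; omega) | omega
          exact Fin.val_injective (by omega)
        · intro w hw hwS
          simp only [Finset.mem_insert, Finset.mem_singleton] at hw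
          have hv : w.val = x.val - 1 ∨ w.val = x.val ∨ w.val = y.val ∨ w.val = x.val + 3 := by
            rcases hw with rfl | rfl | rfl | rfl <;> first | simp | (simp only [Fin.val_mk]; omega) | omega
          exact memF w hwS (by omega)
      · -- top end: W = {x-1, x, y}, values n-4, n-3, n-1
        refine count_helper S3 _ ({⟨x.val - 1, by omega⟩, x, y} : Finset (Fin n)) 3 0
          (card3_ge _ _ _ (by first | omega | (simp only [Fin.val_mk]; omega)) (by first | omega | (simp only [Fin.val_mk]; omega))
            (by omega)) ?_ ?_
        · refine Nat.le_zero.mpr (Finset.card_eq_zero.mpr (Finset.filter_eq_empty_iff.mpr ?_))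
          intro w hw
          simp only [Finset.mem_insert, Finset.mem_singleton] at hw
          have hv : w.val = x.val - 1 ∨ w.val = x.val ∨ w.val = y.val := by
            rcases hw with rfl | rfl | rfl <;> first | simp | (simp only [Fin.val_mk]; omega) | omega
          rw [not_not, mem_S3]
          omega
        · intro w hw hwS
          simp only [Finset.mem_insert, Finset.mem_singleton] at hw
          have hv : w.val = x.val - 1 ∨ w.val = x.val ∨ w.val = y.val := by
            rcases hw with rfl | rfl | rfl <;> first | simp | (simp only [Fin.val_mk]; omega) | omega
          exact memF w hwS (by omega)
  · -- far pair: y ≥ x + 3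
    have hfar : x.val + 3 ≤ y.val := by omega
    by_cases ha0 : x.val = 0
    · by_cases hb0 : y.val + 1 < n
      · -- W = {x, 1, y-1, y, y+1}
        refine count_helper S3 _
          ({x, ⟨1, by omega⟩, ⟨y.val - 1, by omega⟩, y, ⟨y.val + 1, hb0⟩} : Finset (Fin n)) 3 1
          (by
            refine le_trans (by omega) (card5_ge _ _ _ _ _ ?_ ?_ ?_ ?_ ?_ ?_ ?_ ?_ ?_ ?_) <;>
              first | omega | (simp only [Fin.val_mk]; omega)) ?_ ?_
        · rw [Finset.card_le_one]
          intro u hu v hv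
          rw [Finset.mem_filter] at hu hv
          have hu2 := (not_mem_S3 u).mp hu.2
          have hv2 := (not_mem_S3 v).mp hv.2
          have hu1 := hu.1
          have hv1 := hv.1
          simp only [Finset.mem_insert, Finset.mem_singleton] at hu1 hv1
          have huv : u.val = x.val ∨ u.val = 1 ∨ u.val = y.val - 1 ∨ u.val = y.val ∨ u.val = y.val + 1 := by
            rcases hu1 with rfl | rfl | rfl | rfl | rfl <;> first | simp | (simp only [Fin.val_mk]; omega) | omega
          have hvv : v.val = x.val ∨ v.val = 1 ∨ v.val = y.val - 1 ∨ v.val = y.val ∨ v.val = y.val + 1 := by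
            rcases hv1 with rfl | rfl | rfl | rfl | rfl <;> first | simp | (simp only [Fin.val_mk]; omega) | omega
          exact Fin.val_injective (by omega)
        · intro w hw hwS
          simp only [Finset.mem_insert, Finset.mem_singleton] at hw
          have hv : w.val = x.val ∨ w.val = 1 ∨ w.val = y.val - 1 ∨ w.val = y.val ∨ w.val = y.val + 1 := by
            rcases hw with rfl | rfl | rfl | rfl | rfl <;> first | simp | (simp only [Fin.val_mk]; omega) | omega
          exact memF w hwS (by omega)
      · -- W = {x, 1, y-1, y}, values 0, 1, n-2, n-1
        refine count_helper S3 _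
          ({x, ⟨1, by omega⟩, ⟨y.val - 1, by omega⟩, y} : Finset (Fin n)) 3 0
          (by
            refine le_trans (by omega) (card4_ge _ _ _ _ ?_ ?_ ?_ ?_ ?_ ?_) <;>
              first | omega | (simp only [Fin.val_mk]; omega)) ?_ ?_
        · refine Nat.le_zero.mpr (Finset.card_eq_zero.mpr (Finset.filter_eq_empty_iff.mpr ?_))
          intro w hw
          simp only [Finset.mem_insert, Finset.mem_singleton] at hw
          have hv : w.val = x.val ∨ w.val = 1 ∨ w.val = y.val - 1 ∨ w.val = y.val := by
            rcases hw with rfl | rfl | rfl | rfl <;> first | simp | (simp only [Fin.val_mk]; omega) | omega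
          rw [not_not, mem_S3]
          omega
        · intro w hw hwS
          simp only [Finset.mem_insert, Finset.mem_singleton] at hw
          have hv : w.val = x.val ∨ w.val = 1 ∨ w.val = y.val - 1 ∨ w.val = y.val := by
            rcases hw with rfl | rfl | rfl | rfl <;> first | simp | (simp only [Fin.val_mk]; omega) | omega
          exact memF w hwS (by omega)
    · by_cases hb0 : y.val + 1 < n
      · -- W = {x-1, x, x+1, y-1, y, y+1}
        refine count_helper S3 _
          ({⟨x.val - 1, by omega⟩, x, ⟨x.val + 1, by omega⟩, ⟨y.val - 1, by omega⟩, y,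
            ⟨y.val + 1, hb0⟩} : Finset (Fin n)) 3 2
          (by
            refine le_trans (by omega)
              (card6_ge _ _ _ _ _ _ ?_ ?_ ?_ ?_ ?_ ?_ ?_ ?_ ?_ ?_ ?_ ?_ ?_ ?_ ?_) <;>
              first | omega | (simp only [Fin.val_mk]; omega)) ?_ ?_
        · apply card_le_two
          intro u v t hu hv ht
          rw [Finset.mem_filter] at hu hv ht
          have hu2 := (not_mem_S3 u).mp hu.2
          have hv2 := (not_mem_S3 v).mp hv.2
          have ht2 := (not_mem_S3 t).mp ht.2
          have hu1 := hu.1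
          have hv1 := hv.1
          have ht1 := ht.1
          simp only [Finset.mem_insert, Finset.mem_singleton] at hu1 hv1 ht1
          have huv : u.val = x.val - 1 ∨ u.val = x.val ∨ u.val = x.val + 1 ∨
              u.val = y.val - 1 ∨ u.val = y.val ∨ u.val = y.val + 1 := by
            rcases hu1 with rfl | rfl | rfl | rfl | rfl | rfl <;> first | simp | (simp only [Fin.val_mk]; omega) | omega
          have hvv : v.val = x.val - 1 ∨ v.val = x.val ∨ v.val = x.val + 1 ∨
              v.val = y.val - 1 ∨ v.val = y.val ∨ v.val = y.val + 1 := by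
            rcases hv1 with rfl | rfl | rfl | rfl | rfl | rfl <;> first | simp | (simp only [Fin.val_mk]; omega) | omega
          have htv : t.val = x.val - 1 ∨ t.val = x.val ∨ t.val = x.val + 1 ∨
              t.val = y.val - 1 ∨ t.val = y.val ∨ t.val = y.val + 1 := by
            rcases ht1 with rfl | rfl | rfl | rfl | rfl | rfl <;> first | simp | (simp only [Fin.val_mk]; omega) | omega
          have : u.val = v.val ∨ u.val = t.val ∨ v.val = t.val := by omega
          rcases this with h | h | h
          · exact Or.inl (Fin.val_injective h)
          · exact Or.inr (Or.inl (Fin.val_injective h))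
          · exact Or.inr (Or.inr (Fin.val_injective h))
        · intro w hw hwS
          simp only [Finset.mem_insert, Finset.mem_singleton] at hw
          have hv : w.val = x.val - 1 ∨ w.val = x.val ∨ w.val = x.val + 1 ∨
              w.val = y.val - 1 ∨ w.val = y.val ∨ w.val = y.val + 1 := by
            rcases hw with rfl | rfl | rfl | rfl | rfl | rfl <;> first | simp | (simp only [Fin.val_mk]; omega) | omega
          exact memF w hwS (by omega)
      · -- W = {x-1, x, x+1, y-1, y}
        refine count_helper S3 _
          ({⟨x.val - 1, by omega⟩, x, ⟨x.val + 1, by omega⟩, ⟨y.val - 1, by omega⟩, y} : Finset (Fin n)) 3 1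
          (by
            refine le_trans (by omega) (card5_ge _ _ _ _ _ ?_ ?_ ?_ ?_ ?_ ?_ ?_ ?_ ?_ ?_) <;>
              first | omega | (simp only [Fin.val_mk]; omega)) ?_ ?_
        · rw [Finset.card_le_one]
          intro u hu v hv
          rw [Finset.mem_filter] at hu hv
          have hu2 := (not_mem_S3 u).mp hu.2
          have hv2 := (not_mem_S3 v).mp hv.2
          have hu1 := hu.1
          have hv1 := hv.1
          simp only [Finset.mem_insert, Finset.mem_singleton] at hu1 hv1
          have huv : u.val = x.val - 1 ∨ u.val = x.val ∨ u.val = x.val + 1 ∨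
              u.val = y.val - 1 ∨ u.val = y.val := by
            rcases hu1 with rfl | rfl | rfl | rfl | rfl <;> first | simp | (simp only [Fin.val_mk]; omega) | omega
          have hvv : v.val = x.val - 1 ∨ v.val = x.val ∨ v.val = x.val + 1 ∨
              v.val = y.val - 1 ∨ v.val = y.val := by
            rcases hv1 with rfl | rfl | rfl | rfl | rfl <;> first | simp | (simp only [Fin.val_mk]; omega) | omega
          exact Fin.val_injective (by omega)
        · intro w hw hwS
          simp only [Finset.mem_insert, Finset.mem_singleton] at hw
          have hv : w.val = x.val - 1 ∨ w.val = x.val ∨ w.val = x.val + 1 ∨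
              w.val = y.val - 1 ∨ w.val = y.val := by
            rcases hw with rfl | rfl | rfl | rfl | rfl <;> first | simp | (simp only [Fin.val_mk]; omega) | omega
          exact memF w hwS (by omega)


lemma card_filter_val (Q : ℕ → Prop) :
    ((univ.filter (fun w : Fin n => Q w.val)).card) = (((Finset.range n).filter Q).card) := by
  rw [← Finset.card_image_of_injective (univ.filter (fun w : Fin n => Q w.val)) Fin.val_injective]
  congr 1
  ext v
  simp only [Finset.mem_image, Finset.mem_filter, Finset.mem_univ, true_and, Finset.mem_range]
  constructor
  · rintro ⟨w, hw, rfl⟩; exact ⟨w.isLt, hw⟩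
  · rintro ⟨hv, hQ⟩; exact ⟨⟨v, hv⟩, hQ, rfl⟩

lemma count_even (m : ℕ) : (((Finset.range m).filter (fun v => v % 2 = 0)).card) = (m + 1) / 2 := by
  induction m with
  | zero => simp
  | succ m ih =>
    rw [Finset.range_add_one, Finset.filter_insert]
    by_cases h : m % 2 = 0
    · rw [if_pos h, Finset.card_insert_of_notMem (by simp)]
      omega
    · rw [if_neg h]
      omega

lemma count_mod5 (m : ℕ) : (((Finset.range m).filter (fun v => v % 5 = 4)).card) = m / 5 := by
  induction m with
  | zero => simp
  | succ m ih =>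
    rw [Finset.range_add_one, Finset.filter_insert]
    by_cases h : m % 5 = 4
    · rw [if_pos h, Finset.card_insert_of_notMem (by simp)]
      omega
    · rw [if_neg h]
      omega

lemma S2_card (hn : 4 ≤ n) : (S2 : Finset (Fin n)).card = (n + 2) / 2 := by
  have hcv := card_filter_val (n := n) (fun v => v % 2 = 0 ∨ v = n - 1)
  have hs : (S2 : Finset (Fin n)).card
      = (((Finset.range n).filter (fun v => v % 2 = 0 ∨ v = n - 1)).card) := by
    rw [S2]; convert hcv using 2 <;> exact (Finset.filter_congr_decidable _ _ _).symm
  rw [hs]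
  have heq : (Finset.range n).filter (fun v => v % 2 = 0 ∨ v = n - 1)
      = insert (n - 1) ((Finset.range n).filter (fun v => v % 2 = 0)) := by
    ext v
    simp only [Finset.mem_filter, Finset.mem_insert, Finset.mem_range]
    omega
  rw [heq]
  by_cases h : n % 2 = 0
  · rw [Finset.card_insert_of_notMem (by simp; omega), count_even]
    omega
  · rw [Finset.insert_eq_self.mpr (by simp only [Finset.mem_filter, Finset.mem_range]; omega),
      count_even]
    omega

lemma S3_card (hn : 4 ≤ n) : (S3 : Finset (Fin n)).card = n - (n - 4) / 5 := by
  have h1 := Finset.card_filter_add_card_filter_not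
    (s := (univ : Finset (Fin n))) (p := fun w : Fin n => w.val % 5 = 4 ∧ w.val + 5 ≤ n)
  have h2 : (univ.filter (fun w : Fin n => w.val % 5 = 4 ∧ w.val + 5 ≤ n)).card = (n - 4) / 5 := by
    have hcv := card_filter_val (n := n) (fun v => v % 5 = 4 ∧ v + 5 ≤ n)
    have hs : (univ.filter (fun w : Fin n => w.val % 5 = 4 ∧ w.val + 5 ≤ n)).card
        = (((Finset.range n).filter (fun v => v % 5 = 4 ∧ v + 5 ≤ n)).card) := by
      convert hcv using 2 <;> exact (Finset.filter_congr_decidable _ _ _).symm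
    rw [hs]
    have heq : (Finset.range n).filter (fun v => v % 5 = 4 ∧ v + 5 ≤ n)
        = (Finset.range (n - 4)).filter (fun v => v % 5 = 4) := by
      ext v
      simp only [Finset.mem_filter, Finset.mem_range]
      omega
    rw [heq, count_mod5]
  have h3 : (S3 : Finset (Fin n)).card
      = (univ.filter (fun w : Fin n => ¬(w.val % 5 = 4 ∧ w.val + 5 ≤ n))).card := rfl
  have h4 : (univ : Finset (Fin n)).card = n := by simp
  have hle : (n - 4) / 5 ≤ n := by omega
  omega

end Path

/-- Proposition 4.10: for `n ≥ 4`, `adim_2(P_n) = ⌈(n+1)/2⌉` and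
`adim_3(P_n) = n - ⌊(n-4)/5⌋`. -/
theorem adim_pathGraph (n : ℕ) (h : 4 ≤ n) :
    adim (SimpleGraph.pathGraph n) 2 = (n + 2) / 2 ∧
      adim (SimpleGraph.pathGraph n) 3 = n - (n - 4) / 5 := by
  constructor
  · apply le_antisymm
    · exact Nat.sInf_le ⟨S2, gen2 h, S2_card h⟩
    · refine le_csInf ⟨(n + 2) / 2, S2, gen2 h, S2_card h⟩ ?_
      rintro m ⟨S, hg, rfl⟩
      obtain ⟨H3, Hb, Ht⟩ := lower2_constraints h S hg
      have h1 := k2_arith n h (TN S) (fun t ht => TN_lt ht) H3 Hb Ht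
      have h2 := TN_card (S := S)
      omega
  · apply le_antisymm
    · exact Nat.sInf_le ⟨S3, gen3 h, S3_card h⟩
    · refine le_csInf ⟨n - (n - 4) / 5, S3, gen3 h, S3_card h⟩ ?_
      rintro m ⟨S, hg, rfl⟩
      obtain ⟨h1c, h2c⟩ := lower3_constraints h S hg
      have h1 := k3_arith n (TN S) h1c h2c
      have h2 := TN_card (S := S)
      omega


end
end AdjDim
end
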